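/- arXiv:1210.4025 — 8 statements merged into one kernel-verified Lean document; each statement's English description precedes it below -/
import Mathlib

section
/- Let G = ℤ/Nℤ with dual ĝ, let S ⊆ G with |S| = s, let x : G → ℂ be supported on S, and let Ω ⊆ ĝ. If for every nonzero z : G → ℂ whose Fourier transform vanishes on Ω one has ∑_{t ∉ S} |z(t)| > ∑_{t ∈ S} |z(t)|, then for every z ≠ 0 with ẑ|_Ω = 0 one has ∑_{t ∈ S} |x(t)+z(t)| + ∑_{t ∉ S} |z(t)| > ∑_{t ∈ S} |x(t)|; in particular x is the unique ℓ¹-norm minimizer among all y : G → ℂ with ŷ|_Ω = x̂|_Ω. -/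
open Finset Complex

/-- Discrete Fourier transform on `ℤ/Nℤ`:
`ẑ(ω) = N^{-1/2} ∑_{t} z(t) e^{-2πiωt/N}`. -/
noncomputable def dft (N : ℕ) [NeZero N] (z : ZMod N → ℂ) (ω : ZMod N) : ℂ :=
  (N : ℂ) ^ (-(1:ℂ)/2) *
    ∑ t : ZMod N, z t * Complex.exp (-2 * Real.pi * Complex.I * (ω.val * t.val) / N)

/-- (ii) ⇒ (i): if every nonzero `z` with `ẑ|_Ω = 0` satisfies
`∑_{G∖S}|z| > ∑_S|z|`, then for every such `z` one has
`∑_S |x+z| + ∑_{G∖S}|z| > ∑_S |x|`, and `x` is the unique `ℓ¹`-minimizer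
among `y` with `ŷ|_Ω = x̂|_Ω`. -/
theorem stmt0 (N : ℕ) [NeZero N] (S : Finset (ZMod N)) (s : ℕ) (hS : S.card = s)
    (x : ZMod N → ℂ) (hx : ∀ t, t ∉ S → x t = 0) (Ω : Finset (ZMod N))
    (hii : ∀ z : ZMod N → ℂ, z ≠ 0 → (∀ ω ∈ Ω, dft N z ω = 0) →
      ∑ t ∈ Sᶜ, ‖z t‖ > ∑ t ∈ S, ‖z t‖) :
    (∀ z : ZMod N → ℂ, z ≠ 0 → (∀ ω ∈ Ω, dft N z ω = 0) →
      ∑ t ∈ S, ‖x t + z t‖ + ∑ t ∈ Sᶜ, ‖z t‖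
        > ∑ t ∈ S, ‖x t‖) ∧
    (∀ y : ZMod N → ℂ, (∀ ω ∈ Ω, dft N y ω = dft N x ω) → y ≠ x →
      ∑ t : ZMod N, ‖y t‖ > ∑ t : ZMod N, ‖x t‖) := by
  have key : ∀ z : ZMod N → ℂ, z ≠ 0 → (∀ ω ∈ Ω, dft N z ω = 0) →
      ∑ t ∈ S, ‖x t + z t‖ + ∑ t ∈ Sᶜ, ‖z t‖
        > ∑ t ∈ S, ‖x t‖ := by
    intro z hz hΩ
    have h1 : ∑ t ∈ S, ‖x t‖ - ∑ t ∈ S, ‖z t‖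
        ≤ ∑ t ∈ S, ‖x t + z t‖ := by
      rw [← Finset.sum_sub_distrib]
      apply Finset.sum_le_sum
      intro t _
      have := norm_sub_norm_le (x t) (-(z t))
      simpa [sub_neg_eq_add] using this
    have h2 := hii z hz hΩ
    linarith
  refine ⟨key, ?_⟩
  intro y hy hyx
  set z : ZMod N → ℂ := fun t => y t - x t with hzdef
  have hz : z ≠ 0 := by
    intro h
    apply hyx
    funext t
    have := congrFun h t
    simp [hzdef] at this
    exact sub_eq_zero.mp this
  have hzΩ : ∀ ω ∈ Ω, dft N z ω = 0 := by
    intro ω hω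
    have : dft N z ω = dft N y ω - dft N x ω := by
      simp only [dft, hzdef, sub_mul, Finset.sum_sub_distrib, mul_sub]
    rw [this, hy ω hω, sub_self]
  have hk := key z hz hzΩ
  have hxz : ∀ t, x t + z t = y t := by intro t; simp [hzdef]
  have hsplit : ∀ w : ZMod N → ℂ, ∑ t : ZMod N, ‖w t‖
      = ∑ t ∈ S, ‖w t‖ + ∑ t ∈ Sᶜ, ‖w t‖ := by
    intro w
    rw [← Finset.sum_add_sum_compl S]
  have hyc : ∀ t ∈ Sᶜ, ‖y t‖ = ‖z t‖ := by
    intro t ht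
    rw [Finset.mem_compl] at ht
    simp [hzdef, hx t ht]
  have hxc : ∑ t ∈ Sᶜ, ‖x t‖ = 0 := by
    apply Finset.sum_eq_zero
    intro t ht
    rw [Finset.mem_compl] at ht
    simp [hx t ht]
  rw [hsplit y, hsplit x, hxc, Finset.sum_congr rfl hyc]
  have : ∑ t ∈ S, ‖y t‖ = ∑ t ∈ S, ‖x t + z t‖ := by
    apply Finset.sum_congr rfl
    intro t _
    rw [hxz]
  rw [this]
  linarith
end

section
/- Let G = ℤ/Nℤ, S ⊆ G, Ω ⊆ dual of G, and α ∈ (0,1). Suppose for every λ : S → ℂ with |λ(t)| = 1 for all t ∈ S, there exists p : G → ℂ whose Fourier transform is supported in Ω with |p(t) − λ(t)| < α for t ∈ S and |p(t)| < 1 − α for t ∉ S. Then every nonzero z : G → ℂ with ẑ|_Ω = 0 satisfies ∑_{t ∈ S} |z(t)| < ∑_{t ∉ S} |z(t)|. -/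
open Finset Complex

lemma charSum (N : ℕ) [NeZero N] (k : ℤ) (hk : ¬ (N:ℤ) ∣ k) :
    ∑ ω : ZMod N, Complex.exp (2 * Real.pi * Complex.I * (ω.val * k) / N) = 0 := by
  have hN : (N:ℂ) ≠ 0 := Nat.cast_ne_zero.2 (NeZero.ne N)
  set ζ := Complex.exp (2 * Real.pi * Complex.I * k / N) with hζ
  have hterm : ∀ j : ℕ, Complex.exp (2 * Real.pi * Complex.I * (j * k) / N) = ζ ^ j := by
    intro j
    rw [hζ, ← Complex.exp_nat_mul]
    ring_nf
  have hsum : ∑ ω : ZMod N, Complex.exp (2 * Real.pi * Complex.I * (ω.val * k) / N)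
      = ∑ j ∈ Finset.range N, ζ ^ j := by
    refine Finset.sum_nbij' (fun ω => ω.val) (fun j => ((j : ℕ) : ZMod N)) ?_ ?_ ?_ ?_ ?_
    · simp [ZMod.val_lt]
    · simp
    · simp [ZMod.natCast_val, ZMod.natCast_rightInverse _]
    · intro a ha
      simp [ZMod.val_cast_of_lt (Finset.mem_range.mp ha)]
    · intro a _
      exact hterm a.val
  have hζN : ζ ^ N = 1 := by
    rw [hζ, ← Complex.exp_nat_mul]
    have : (N:ℂ) * (2 * Real.pi * Complex.I * k / N) = k * (2 * Real.pi * Complex.I) := by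
      field_simp
    rw [this, Complex.exp_int_mul_two_pi_mul_I]
  have hζ1 : ζ ≠ 1 := by
    rw [hζ, Ne, Complex.exp_eq_one_iff]
    rintro ⟨n, hn⟩
    apply hk
    refine ⟨n, ?_⟩
    rw [mul_comm]
    have h2 : (2:ℂ) * Real.pi * Complex.I ≠ 0 := by
      simp [Real.pi_ne_zero, Complex.I_ne_zero]
    have : (k:ℂ) = n * N := by
      field_simp at hn
      have := mul_right_cancel₀ h2 (by linear_combination (2 * (Real.pi:ℂ) * Complex.I) * hn : (k:ℂ) * (2 * Real.pi * Complex.I) = (n * N) * (2 * Real.pi * Complex.I))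
      exact this
    exact_mod_cast this
  rw [hsum, geom_sum_eq hζ1, hζN, sub_self, zero_div]

lemma innerSum (N : ℕ) [NeZero N] (t s : ZMod N) :
    ∑ ω : ZMod N, Complex.exp (-2 * Real.pi * Complex.I * (ω.val * t.val) / N) *
      (starRingEnd ℂ) (Complex.exp (-2 * Real.pi * Complex.I * (ω.val * s.val) / N))
      = if t = s then (N:ℂ) else 0 := by
  have hN : (N:ℂ) ≠ 0 := Nat.cast_ne_zero.2 (NeZero.ne N)
  set k : ℤ := (s.val:ℤ) - (t.val:ℤ) with hk
  have hterm : ∀ ω : ZMod N,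
      Complex.exp (-2 * Real.pi * Complex.I * (ω.val * t.val) / N) *
      (starRingEnd ℂ) (Complex.exp (-2 * Real.pi * Complex.I * (ω.val * s.val) / N))
      = Complex.exp (2 * Real.pi * Complex.I * (ω.val * k) / N) := by
    intro ω
    rw [← Complex.exp_conj, ← Complex.exp_add]
    congr 1
    have : (starRingEnd ℂ) (-2 * Real.pi * Complex.I * (ω.val * s.val) / N)
        = 2 * Real.pi * Complex.I * (ω.val * s.val) / N := by
      simp only [map_div₀, map_mul, map_neg, Complex.conj_I, Complex.conj_natCast,
        Complex.conj_ofReal, map_ofNat]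
      ring
    rw [this, hk]
    field_simp
    push_cast; ring
  simp only [hterm]
  by_cases hts : t = s
  · subst hts
    simp [hk]
  · rw [if_neg hts, charSum N k ?_]
    intro hdvd
    have hlt : |k| < N := by
      have h1 := ZMod.val_lt s
      have h2 := ZMod.val_lt t
      rw [hk, abs_lt]
      omega
    have h0 := Int.eq_zero_of_abs_lt_dvd hdvd hlt
    have : s.val = t.val := by omega
    exact hts (ZMod.val_injective N this).symm

lemma parseval (N : ℕ) [NeZero N] (p z : ZMod N → ℂ) :
    ∑ ω : ZMod N, dft N p ω * (starRingEnd ℂ) (dft N z ω)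
      = ∑ t : ZMod N, p t * (starRingEnd ℂ) (z t) := by
  have hN : (N:ℂ) ≠ 0 := Nat.cast_ne_zero.2 (NeZero.ne N)
  set c : ℂ := (N : ℂ) ^ (-(1:ℂ)/2) with hc
  have hcr : c = ((((N:ℝ)) ^ (-(1:ℝ)/2) : ℝ) : ℂ) := by
    rw [hc, show ((N:ℂ)) = (((N:ℝ):ℝ):ℂ) from by push_cast; ring,
      show (-(1:ℂ)/2) = ((-(1:ℝ)/2 : ℝ):ℂ) from by push_cast; ring,
      Complex.ofReal_cpow (Nat.cast_nonneg N)]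
  have hconj : (starRingEnd ℂ) c = c := by rw [hcr, Complex.conj_ofReal]
  have hcc : c * c = 1 / N := by
    rw [hc, ← Complex.cpow_add _ _ hN]
    norm_num [Complex.cpow_neg_one]
  calc ∑ ω : ZMod N, dft N p ω * (starRingEnd ℂ) (dft N z ω)
      = (c * c) * ∑ ω : ZMod N,
          (∑ t : ZMod N, p t * Complex.exp (-2 * Real.pi * Complex.I * (ω.val * t.val) / N)) *
          (∑ s : ZMod N, (starRingEnd ℂ) (z s) *
            (starRingEnd ℂ) (Complex.exp (-2 * Real.pi * Complex.I * (ω.val * s.val) / N))) := by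
        rw [Finset.mul_sum]
        refine Finset.sum_congr rfl fun ω _ => ?_
        simp only [dft, map_mul, ← hc, hconj, map_sum]
        ring
    _ = (c * c) * ∑ t : ZMod N, ∑ s : ZMod N, (p t * (starRingEnd ℂ) (z s)) *
          ∑ ω : ZMod N, Complex.exp (-2 * Real.pi * Complex.I * (ω.val * t.val) / N) *
            (starRingEnd ℂ) (Complex.exp (-2 * Real.pi * Complex.I * (ω.val * s.val) / N)) := by
        congr 1
        simp only [Finset.sum_mul_sum]
        rw [Finset.sum_comm]
        refine Finset.sum_congr rfl fun t _ => ?_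
        rw [Finset.sum_comm]
        refine Finset.sum_congr rfl fun s _ => ?_
        rw [Finset.mul_sum]
        exact Finset.sum_congr rfl fun ω _ => by ring
    _ = ∑ t : ZMod N, p t * (starRingEnd ℂ) (z t) := by
        simp only [innerSum]
        rw [hcc, Finset.mul_sum]
        refine Finset.sum_congr rfl fun t _ => ?_
        have h1 : ∑ s : ZMod N, (p t * (starRingEnd ℂ) (z s)) * (if t = s then (N:ℂ) else 0)
            = p t * (starRingEnd ℂ) (z t) * N := by
          rw [Finset.sum_eq_single t]
          · simp
          · intro b _ hb
            simp [Ne.symm hb]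
          · simp
        rw [h1]
        field_simp

/-- (iii) ⇒ (ii): if every unimodular `λ` on `S` admits an interpolating `p`
with spectrum in `Ω`, `|p − λ| < α` on `S` and `|p| < 1 − α` off `S`, then every
nonzero `z` with `ẑ|_Ω = 0` satisfies `∑_S |z| < ∑_{G∖S} |z|`. -/
theorem stmt1 (N : ℕ) [NeZero N] (S : Finset (ZMod N)) (Ω : Finset (ZMod N))
    (α : ℝ) (hα : α ∈ Set.Ioo (0:ℝ) 1)
    (hiii : ∀ l : ZMod N → ℂ, (∀ t ∈ S, ‖l t‖ = 1) →
      ∃ p : ZMod N → ℂ, (∀ ω, ω ∉ Ω → dft N p ω = 0) ∧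
        (∀ t ∈ S, ‖p t - l t‖ < α) ∧
        (∀ t, t ∉ S → ‖p t‖ < 1 - α)) :
    ∀ z : ZMod N → ℂ, z ≠ 0 → (∀ ω ∈ Ω, dft N z ω = 0) →
      ∑ t ∈ S, ‖z t‖ < ∑ t ∈ Sᶜ, ‖z t‖ := by
  obtain ⟨hα0, hα1⟩ := hα
  intro z hz hzΩ
  classical
  set A := ∑ t ∈ S, ‖z t‖ with hA
  set B := ∑ t ∈ Sᶜ, ‖z t‖ with hB
  set l : ZMod N → ℂ := fun t => if z t = 0 then 1 else z t / ‖z t‖ with hldef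
  have hl : ∀ t ∈ S, ‖l t‖ = 1 := by
    intro t _
    by_cases h : z t = 0
    · simp [hldef, h]
    · simp [hldef, h, norm_div]
  obtain ⟨p, hp1, hp2, hp3⟩ := hiii l hl
  have key : ∑ t : ZMod N, p t * (starRingEnd ℂ) (z t) = 0 := by
    rw [← parseval]
    apply Finset.sum_eq_zero
    intro ω _
    by_cases hω : ω ∈ Ω
    · rw [hzΩ ω hω, map_zero, mul_zero]
    · rw [hp1 ω hω, zero_mul]
  have hlz : ∀ t, l t * (starRingEnd ℂ) (z t) = (‖z t‖ : ℂ) := by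
    intro t
    by_cases h : z t = 0
    · simp [hldef, h]
    · simp only [hldef, if_neg h]
      rw [div_mul_eq_mul_div, Complex.mul_conj, Complex.normSq_eq_norm_sq]
      have hne : (‖z t‖ : ℂ) ≠ 0 := by
        exact_mod_cast Complex.ofReal_ne_zero.2 (norm_ne_zero_iff.mpr h)
      field_simp
      push_cast; ring
  have hsplit : ∑ t ∈ S, p t * (starRingEnd ℂ) (z t)
      = - ∑ t ∈ Sᶜ, p t * (starRingEnd ℂ) (z t) := by
    have := Finset.sum_add_sum_compl S (fun t => p t * (starRingEnd ℂ) (z t))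
    rw [key] at this
    linear_combination this
  -- bound on the complement sum
  have h1 : ‖∑ t ∈ Sᶜ, p t * (starRingEnd ℂ) (z t)‖ ≤ (1 - α) * B := by
    calc ‖∑ t ∈ Sᶜ, p t * (starRingEnd ℂ) (z t)‖
        ≤ ∑ t ∈ Sᶜ, ‖p t * (starRingEnd ℂ) (z t)‖ :=
          norm_sum_le _ _
      _ ≤ ∑ t ∈ Sᶜ, (1 - α) * ‖z t‖ := by
          refine Finset.sum_le_sum fun t ht => ?_
          rw [norm_mul, Complex.norm_conj]
          exact mul_le_mul_of_nonneg_right (le_of_lt (hp3 t (Finset.mem_compl.mp ht)))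
            (norm_nonneg _)
      _ = (1 - α) * B := by rw [hB, Finset.mul_sum]
  by_cases hA0 : ∀ t ∈ S, z t = 0
  · -- A = 0, show 0 < B
    have hA' : A = 0 := by
      rw [hA]
      exact Finset.sum_eq_zero fun t ht => by rw [hA0 t ht, norm_zero]
    obtain ⟨t0, ht0⟩ : ∃ t, z t ≠ 0 := by
      by_contra h
      push_neg at h
      exact hz (funext h)
    have ht0S : t0 ∈ Sᶜ := Finset.mem_compl.mpr fun h => ht0 (hA0 t0 h)
    have : 0 < B := by
      rw [hB]
      have hpos : 0 < ‖z t0‖ := norm_pos_iff.mpr ht0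
      refine lt_of_lt_of_le hpos ?_
      exact Finset.single_le_sum (fun t _ => norm_nonneg _) ht0S
    linarith
  · push_neg at hA0
    obtain ⟨t0, ht0S, ht0⟩ := hA0
    -- strict bound on S
    have h2 : A < α * A + ‖∑ t ∈ S, p t * (starRingEnd ℂ) (z t)‖ := by
      have hrepr : (A : ℂ) = (∑ t ∈ S, (l t - p t) * (starRingEnd ℂ) (z t))
          + ∑ t ∈ S, p t * (starRingEnd ℂ) (z t) := by
        rw [hA]
        push_cast
        rw [← Finset.sum_add_distrib]
        refine Finset.sum_congr rfl fun t _ => ?_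
        rw [← hlz t]
        ring
      have habs : A ≤ ‖∑ t ∈ S, (l t - p t) * (starRingEnd ℂ) (z t)‖
          + ‖∑ t ∈ S, p t * (starRingEnd ℂ) (z t)‖ := by
        calc A = ‖(A : ℂ)‖ := by
              rw [Complex.norm_real, Real.norm_eq_abs, _root_.abs_of_nonneg]
              rw [hA]
              exact Finset.sum_nonneg fun t _ => norm_nonneg _
          _ ≤ _ := by rw [hrepr]; exact norm_add_le _ _
      have hstrict : ‖∑ t ∈ S, (l t - p t) * (starRingEnd ℂ) (z t)‖ < α * A := by
        calc ‖∑ t ∈ S, (l t - p t) * (starRingEnd ℂ) (z t)‖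
            ≤ ∑ t ∈ S, ‖(l t - p t) * (starRingEnd ℂ) (z t)‖ :=
              norm_sum_le _ _
          _ < ∑ t ∈ S, α * ‖z t‖ := by
              refine Finset.sum_lt_sum (fun t ht => ?_) ⟨t0, ht0S, ?_⟩
              · rw [norm_mul, Complex.norm_conj]
                refine mul_le_mul_of_nonneg_right ?_ (norm_nonneg _)
                rw [← norm_neg, neg_sub]
                exact le_of_lt (hp2 t ht)
              · rw [norm_mul, Complex.norm_conj]
                refine mul_lt_mul_of_pos_right ?_ (norm_pos_iff.mpr ht0)
                rw [← norm_neg, neg_sub]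
                exact hp2 t0 ht0S
          _ = α * A := by rw [hA, Finset.mul_sum]
      linarith
    have h3 : ‖∑ t ∈ S, p t * (starRingEnd ℂ) (z t)‖
        = ‖∑ t ∈ Sᶜ, p t * (starRingEnd ℂ) (z t)‖ := by
      rw [hsplit, norm_neg]
    have : A < α * A + (1 - α) * B := by
      calc A < α * A + ‖∑ t ∈ S, p t * (starRingEnd ℂ) (z t)‖ := h2
        _ = α * A + ‖∑ t ∈ Sᶜ, p t * (starRingEnd ℂ) (z t)‖ := by rw [h3]
        _ ≤ α * A + (1 - α) * B := by linarith
    nlinarith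
end

section
/- Let G = ℤ/Nℤ, S ⊆ G, Ω ⊆ ℤ/Nℤ, α ∈ (0,1), and suppose p : G → ℂ has p̂ supported in Ω and a unimodular λ : S → ℂ satisfies |p − λ| < α on S and |p| < 1 − α on G∖S. If z : G → ℂ satisfies ẑ|_Ω = 0, λ·conj(z) = |z| on S, and z does not vanish identically on S, then (1−α)∑_S |z| < |∑_S p·conj(z)| and |∑_{G∖S} p·conj(z)| ≤ (1−α)∑_{G∖S}|z|, hence ∑_S |z| < ∑_{G∖S} |z|. -/
open Finset Complex

section aux

variable {N : ℕ} [NeZero N]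

lemma aux_char (ω t : ZMod N) :
    Complex.exp (-2 * Real.pi * Complex.I * (ω.val * t.val) / N)
      = ZMod.stdAddChar (-(ω * t)) := by
  have h1 : (-(ω * t) : ZMod N) = ((-(ω.val * t.val : ℤ) : ℤ) : ZMod N) := by
    push_cast
    simp [ZMod.natCast_zmod_val]
  rw [h1, ZMod.stdAddChar_coe]
  congr 1
  push_cast
  ring

lemma aux_conj_char (x : ZMod N) :
    (starRingEnd ℂ) (ZMod.stdAddChar x) = ZMod.stdAddChar (-x) := by
  have h1 : x = ((x.val : ℤ) : ZMod N) := by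
    push_cast
    simp [ZMod.natCast_zmod_val]
  have h2 : (-x : ZMod N) = ((-(x.val : ℤ) : ℤ) : ZMod N) := by
    push_cast
    simp [ZMod.natCast_zmod_val]
  rw [h2, ZMod.stdAddChar_coe]
  conv_lhs => rw [h1, ZMod.stdAddChar_coe]
  rw [← Complex.exp_conj]
  congr 1
  simp only [map_div₀, map_mul, Complex.conj_I, Complex.conj_ofReal, map_ofNat,
    map_intCast, map_natCast]
  push_cast
  ring

lemma aux_dft (f : ZMod N → ℂ) (ω : ZMod N) :
    dft N f ω = (N : ℂ) ^ (-(1:ℂ)/2) * ∑ t : ZMod N, f t * ZMod.stdAddChar (-(ω * t)) := by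
  unfold dft
  congr 1
  exact Finset.sum_congr rfl fun t _ => by rw [aux_char]

lemma aux_orth (a : ZMod N) :
    ∑ ω : ZMod N, ZMod.stdAddChar (a * ω) = if a = 0 then (N : ℂ) else 0 := by
  split_ifs with h
  · simp only [h, zero_mul, AddChar.map_zero_eq_one, sum_const, card_univ, ZMod.card,
      nsmul_eq_mul, mul_one]
  · exact AddChar.sum_eq_zero_of_ne_one (ZMod.isPrimitive_stdAddChar N h)

lemma aux_parseval_zero (p z : ZMod N → ℂ) (Ω : Finset (ZMod N))
    (hp : ∀ ω, ω ∉ Ω → dft N p ω = 0) (hz : ∀ ω ∈ Ω, dft N z ω = 0) :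
    ∑ t : ZMod N, p t * (starRingEnd ℂ) (z t) = 0 := by
  have hN0 : (N : ℂ) ≠ 0 := Nat.cast_ne_zero.mpr (NeZero.ne N)
  set c : ℂ := (N : ℂ) ^ (-(1:ℂ)/2) with hcdef
  have hc0 : c ≠ 0 := by
    rw [hcdef, Complex.cpow_def_of_ne_zero hN0]
    exact Complex.exp_ne_zero _
  have hQ0 : ∑ ω : ZMod N, dft N p ω * (starRingEnd ℂ) (dft N z ω) = 0 := by
    refine Finset.sum_eq_zero fun ω _ => ?_
    by_cases hω : ω ∈ Ω
    · rw [hz ω hω, map_zero, mul_zero]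
    · rw [hp ω hω, zero_mul]
  have hQ : ∑ ω : ZMod N, dft N p ω * (starRingEnd ℂ) (dft N z ω)
      = c * (starRingEnd ℂ) c * ((N : ℂ) * ∑ t : ZMod N, p t * (starRingEnd ℂ) (z t)) := by
    have expand : ∀ ω : ZMod N, dft N p ω * (starRingEnd ℂ) (dft N z ω)
        = c * (starRingEnd ℂ) c *
          ∑ t : ZMod N, ∑ s : ZMod N,
            p t * (starRingEnd ℂ) (z s) * ZMod.stdAddChar ((s - t) * ω) := by
      intro ω
      rw [aux_dft, aux_dft, map_mul, map_sum]
      have hterm : ∀ s : ZMod N, (starRingEnd ℂ) (z s * ZMod.stdAddChar (-(ω * s)))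
          = (starRingEnd ℂ) (z s) * ZMod.stdAddChar (ω * s) := by
        intro s
        rw [map_mul, aux_conj_char, neg_neg]
      rw [Finset.sum_congr rfl fun s _ => hterm s]
      rw [show (c * ∑ t : ZMod N, p t * ZMod.stdAddChar (-(ω * t))) *
          ((starRingEnd ℂ) c * ∑ s : ZMod N, (starRingEnd ℂ) (z s) * ZMod.stdAddChar (ω * s))
          = c * (starRingEnd ℂ) c *
            ((∑ t : ZMod N, p t * ZMod.stdAddChar (-(ω * t))) *
             (∑ s : ZMod N, (starRingEnd ℂ) (z s) * ZMod.stdAddChar (ω * s))) by ring]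
      congr 1
      rw [Finset.sum_mul_sum]
      refine Finset.sum_congr rfl fun t _ => Finset.sum_congr rfl fun s _ => ?_
      have : ZMod.stdAddChar (-(ω * t)) * ZMod.stdAddChar (ω * s)
          = ZMod.stdAddChar ((s - t) * ω) := by
        rw [← AddChar.map_add_eq_mul]
        congr 1
        ring
      calc p t * ZMod.stdAddChar (-(ω * t)) * ((starRingEnd ℂ) (z s) * ZMod.stdAddChar (ω * s))
          = p t * (starRingEnd ℂ) (z s) *
              (ZMod.stdAddChar (-(ω * t)) * ZMod.stdAddChar (ω * s)) := by ring
        _ = p t * (starRingEnd ℂ) (z s) * ZMod.stdAddChar ((s - t) * ω) := by rw [this]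
    rw [Finset.sum_congr rfl fun ω _ => expand ω, ← Finset.mul_sum]
    congr 1
    rw [Finset.sum_comm]
    rw [Finset.sum_congr rfl fun t (_ : t ∈ Finset.univ) => Finset.sum_comm]
    have inner : ∀ t : ZMod N,
        ∑ s : ZMod N, ∑ ω : ZMod N, p t * (starRingEnd ℂ) (z s) * ZMod.stdAddChar ((s - t) * ω)
        = (N : ℂ) * (p t * (starRingEnd ℂ) (z t)) := by
      intro t
      have : ∀ s : ZMod N,
          ∑ ω : ZMod N, p t * (starRingEnd ℂ) (z s) * ZMod.stdAddChar ((s - t) * ω)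
          = p t * (starRingEnd ℂ) (z s) * (if s - t = 0 then (N : ℂ) else 0) := by
        intro s
        rw [← Finset.mul_sum, aux_orth]
      rw [Finset.sum_congr rfl fun s _ => this s]
      have : ∀ s : ZMod N,
          p t * (starRingEnd ℂ) (z s) * (if s - t = 0 then (N : ℂ) else 0)
          = if s = t then p t * (starRingEnd ℂ) (z s) * (N : ℂ) else 0 := by
        intro s
        by_cases h : s = t <;> simp [h, sub_eq_zero]
      rw [Finset.sum_congr rfl fun s _ => this s, Finset.sum_ite_eq' Finset.univ t
        (fun s => p t * (starRingEnd ℂ) (z s) * (N : ℂ))]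
      simp [mul_comm]
    rw [Finset.sum_congr rfl fun t _ => inner t, ← Finset.mul_sum]
  rw [hQ0] at hQ
  have hcc : c * (starRingEnd ℂ) c ≠ 0 :=
    mul_ne_zero hc0 (by simpa using hc0)
  have := (mul_eq_zero.mp hQ.symm).resolve_left hcc
  exact (mul_eq_zero.mp this).resolve_left hN0

end aux

/-- The main estimate in (iii) ⇒ (ii): with `p̂` supported in `Ω`, `|p − λ| < α`
on `S`, `|p| < 1 − α` off `S`, and `z` with `ẑ|_Ω = 0`, `λ·conj z = |z|` on `S`,
`z` not identically zero on `S`, one gets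
`(1−α)∑_S|z| < |∑_S p·conj z|`, `|∑_{G∖S} p·conj z| ≤ (1−α)∑_{G∖S}|z|`,
and hence `∑_S|z| < ∑_{G∖S}|z|`. -/
theorem stmt5 (N : ℕ) [NeZero N] (S : Finset (ZMod N)) (Ω : Finset (ZMod N))
    (α : ℝ) (hα : α ∈ Set.Ioo (0:ℝ) 1)
    (p l z : ZMod N → ℂ)
    (hp : ∀ ω, ω ∉ Ω → dft N p ω = 0)
    (hl : ∀ t ∈ S, ‖l t‖ = 1)
    (hpl : ∀ t ∈ S, ‖p t - l t‖ < α)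
    (hpc : ∀ t, t ∉ S → ‖p t‖ < 1 - α)
    (hz : ∀ ω ∈ Ω, dft N z ω = 0)
    (hlz : ∀ t ∈ S, l t * (starRingEnd ℂ) (z t) = (‖z t‖ : ℂ))
    (hznz : ∃ t ∈ S, z t ≠ 0) :
    (1 - α) * ∑ t ∈ S, ‖z t‖
        < ‖∑ t ∈ S, p t * (starRingEnd ℂ) (z t)‖ ∧
    ‖∑ t ∈ Sᶜ, p t * (starRingEnd ℂ) (z t)‖
        ≤ (1 - α) * ∑ t ∈ Sᶜ, ‖z t‖ ∧
    ∑ t ∈ S, ‖z t‖ < ∑ t ∈ Sᶜ, ‖z t‖ := by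
  obtain ⟨hα0, hα1⟩ := hα
  set A : ℝ := ∑ t ∈ S, ‖z t‖ with hA
  set B : ℝ := ∑ t ∈ Sᶜ, ‖z t‖ with hB
  -- the error sum on S
  have hsplit : ∑ t ∈ S, p t * (starRingEnd ℂ) (z t)
      = (A : ℂ) + ∑ t ∈ S, (p t - l t) * (starRingEnd ℂ) (z t) := by
    rw [hA, Complex.ofReal_sum, ← Finset.sum_add_distrib]
    refine Finset.sum_congr rfl fun t ht => ?_
    rw [← hlz t ht]
    ring
  have herr_lt : ∑ t ∈ S, ‖(p t - l t) * (starRingEnd ℂ) (z t)‖ < α * A := by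
    rw [hA, Finset.mul_sum]
    obtain ⟨t₀, ht₀S, ht₀⟩ := hznz
    refine Finset.sum_lt_sum (fun t ht => ?_) ⟨t₀, ht₀S, ?_⟩
    · rw [norm_mul, Complex.norm_conj]
      exact mul_le_mul_of_nonneg_right (le_of_lt (hpl t ht)) (norm_nonneg _)
    · rw [norm_mul, Complex.norm_conj]
      exact mul_lt_mul_of_pos_right (hpl t₀ ht₀S) (norm_pos_iff.mpr ht₀)
  have hA_nonneg : 0 ≤ A := Finset.sum_nonneg fun t _ => norm_nonneg _
  have h1 : (1 - α) * A < ‖∑ t ∈ S, p t * (starRingEnd ℂ) (z t)‖ := by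
    rw [hsplit]
    have habs : ‖(A : ℂ)‖
        - ‖∑ t ∈ S, (p t - l t) * (starRingEnd ℂ) (z t)‖
        ≤ ‖(A : ℂ) + ∑ t ∈ S, (p t - l t) * (starRingEnd ℂ) (z t)‖ := by
      have := norm_add_le ((A : ℂ) + ∑ t ∈ S, (p t - l t) * (starRingEnd ℂ) (z t))
        (-∑ t ∈ S, (p t - l t) * (starRingEnd ℂ) (z t))
      simp only [add_neg_cancel_right, norm_neg] at this
      linarith
    have hAabs : ‖(A : ℂ)‖ = A := by
      rw [Complex.norm_real, Real.norm_eq_abs, _root_.abs_of_nonneg hA_nonneg]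
    have htri : ‖∑ t ∈ S, (p t - l t) * (starRingEnd ℂ) (z t)‖
        ≤ ∑ t ∈ S, ‖(p t - l t) * (starRingEnd ℂ) (z t)‖ :=
      norm_sum_le _ _
    nlinarith
  have h2 : ‖∑ t ∈ Sᶜ, p t * (starRingEnd ℂ) (z t)‖ ≤ (1 - α) * B := by
    calc ‖∑ t ∈ Sᶜ, p t * (starRingEnd ℂ) (z t)‖
        ≤ ∑ t ∈ Sᶜ, ‖p t * (starRingEnd ℂ) (z t)‖ :=
          norm_sum_le _ _
      _ ≤ ∑ t ∈ Sᶜ, (1 - α) * ‖z t‖ := by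
          refine Finset.sum_le_sum fun t ht => ?_
          rw [norm_mul, Complex.norm_conj]
          exact mul_le_mul_of_nonneg_right
            (le_of_lt (hpc t (Finset.mem_compl.mp ht))) (norm_nonneg _)
      _ = (1 - α) * B := by rw [hB, Finset.mul_sum]
  refine ⟨h1, h2, ?_⟩
  have hkey : ∑ t : ZMod N, p t * (starRingEnd ℂ) (z t) = 0 :=
    aux_parseval_zero p z Ω hp hz
  have hsum : ∑ t ∈ S, p t * (starRingEnd ℂ) (z t)
      = -∑ t ∈ Sᶜ, p t * (starRingEnd ℂ) (z t) := by
    have := Finset.sum_add_sum_compl S (fun t => p t * (starRingEnd ℂ) (z t))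
    rw [hkey] at this
    linear_combination this
  have : (1 - α) * A < (1 - α) * B := by
    calc (1 - α) * A < ‖∑ t ∈ S, p t * (starRingEnd ℂ) (z t)‖ := h1
      _ = ‖∑ t ∈ Sᶜ, p t * (starRingEnd ℂ) (z t)‖ := by rw [hsum, norm_neg]
      _ ≤ (1 - α) * B := h2
  exact lt_of_mul_lt_mul_left this (by linarith)
end

section
/- Let N not be divisible by 2 or 3, t ≠ 0 in ℤ/Nℤ, φ ∈ ℝ, Bₙ = cos(2πnt/N − φ), and M the average over n ∈ ℤ/Nℤ. Then for every u > 0, M(e^{uBₙ}) ≤ 1 + u²/4 + ∑_{k ≥ 4} uᵏ/k!. -/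
open Finset

private lemma aux_sum_val (N : ℕ) [NeZero N] (f : ℕ → ℝ) :
    ∑ n : ZMod N, f n.val = ∑ i ∈ range N, f i := by
  refine Finset.sum_nbij' (fun n => n.val) (fun i => (i : ZMod N)) ?_ ?_ ?_ ?_ ?_
  · intro a _; exact mem_range.2 (ZMod.val_lt a)
  · intros; exact mem_univ _
  · intro a _; exact ZMod.natCast_rightInverse a
  · intro i hi; exact ZMod.val_natCast_of_lt (mem_range.1 hi)
  · intros; rfl

private lemma aux_cos_sum (N : ℕ) [NeZero N] (a : ℕ) (ha : ¬ (N ∣ a)) (c : ℝ) :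
    ∑ n : ZMod N, Real.cos (2 * Real.pi * n.val * a / N - c) = 0 := by
  rw [aux_sum_val N (fun m => Real.cos (2 * Real.pi * m * a / N - c))]
  set ζ : ℂ := Complex.exp (2 * Real.pi * Complex.I / N) with hζ
  have hprim : IsPrimitiveRoot ζ N := Complex.isPrimitiveRoot_exp N (NeZero.ne N)
  have hz1 : ζ ^ a ≠ 1 := fun h => ha (hprim.pow_eq_one_iff_dvd a |>.1 h)
  have hzN : (ζ ^ a) ^ N = 1 := by
    rw [← pow_mul, mul_comm, pow_mul, hprim.pow_eq_one, one_pow]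
  have hgeom : ∑ i ∈ range N, (ζ ^ a) ^ i = 0 := by
    rw [geom_sum_eq hz1 N, hzN, sub_self, zero_div]
  have hterm : ∀ i : ℕ, Real.cos (2 * Real.pi * i * a / N - c)
      = (Complex.exp (-(c : ℂ) * Complex.I) * (ζ ^ a) ^ i).re := by
    intro i
    have hN : (N : ℝ) ≠ 0 := Nat.cast_ne_zero.2 (NeZero.ne N)
    have h1 : (ζ ^ a) ^ i = Complex.exp (((2 * Real.pi * i * a / N : ℝ) : ℂ) * Complex.I) := by
      rw [hζ, ← Complex.exp_nat_mul, ← Complex.exp_nat_mul]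
      congr 1
      push_cast
      field_simp
    rw [h1, ← Complex.exp_add]
    have h2 : -(c:ℂ) * Complex.I + ((2 * Real.pi * i * a / N : ℝ):ℂ) * Complex.I
        = ((2 * Real.pi * i * a / N - c : ℝ) : ℂ) * Complex.I := by push_cast; ring
    rw [h2, Complex.exp_ofReal_mul_I_re]
  calc ∑ i ∈ range N, Real.cos (2 * Real.pi * i * a / N - c)
      = (Complex.exp (-(c:ℂ) * Complex.I) * ∑ i ∈ range N, (ζ ^ a) ^ i).re := by
        rw [Finset.mul_sum, Complex.re_sum]
        exact Finset.sum_congr rfl fun i _ => hterm i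
    _ = 0 := by rw [hgeom, mul_zero, Complex.zero_re]

/-- Exponential moment bound: under the hypotheses of the cosine moment estimates,
`M(e^{uBₙ}) ≤ 1 + u²/4 + ∑_{k ≥ 4} uᵏ/k!` for every `u > 0`. -/
theorem stmt11 (N : ℕ) [NeZero N] (hN2 : ¬ (2 ∣ N)) (hN3 : ¬ (3 ∣ N))
    (t : ZMod N) (ht : t ≠ 0) (φ : ℝ) (u : ℝ) (hu : 0 < u) :
    ((1 : ℝ) / N) * ∑ n : ZMod N,
        Real.exp (u * Real.cos (2 * Real.pi * n.val * t.val / N - φ))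
      ≤ 1 + u ^ 2 / 4 + ∑' k : ℕ, u ^ (k + 4) / (Nat.factorial (k + 4)) := by
  have hNpos : (0 : ℝ) < N := Nat.cast_pos.2 (Nat.pos_of_ne_zero (NeZero.ne N))
  have hNne : (N : ℝ) ≠ 0 := ne_of_gt hNpos
  -- divisibility facts
  have hvalne : t.val ≠ 0 := fun h => ht (ZMod.val_eq_zero t |>.1 h)
  have hdvd : ∀ m : ℕ, ¬ (m ∣ N) → Nat.Prime m → ¬ (N ∣ m * t.val) := by
    intro m hm hp hd
    have hcop : Nat.Coprime N m := ((Nat.Prime.coprime_iff_not_dvd hp).2 hm).symm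
    have : N ∣ t.val := hcop.dvd_of_dvd_mul_left hd
    exact hvalne (Nat.eq_zero_of_dvd_of_lt this (ZMod.val_lt t))
  have ha1 : ¬ (N ∣ t.val) := fun h => hvalne (Nat.eq_zero_of_dvd_of_lt h (ZMod.val_lt t))
  have ha2 : ¬ (N ∣ 2 * t.val) := hdvd 2 hN2 Nat.prime_two
  have ha3 : ¬ (N ∣ 3 * t.val) := hdvd 3 hN3 Nat.prime_three
  -- notation
  set A : ZMod N → ℝ := fun n => Real.cos (2 * Real.pi * n.val * t.val / N - φ) with hA
  set S : ℕ → ℝ := fun k => (1 / N) * ∑ n : ZMod N, (A n) ^ k with hS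
  -- moments
  have hS0 : S 0 = 1 := by
    simp [hS, Finset.card_univ]
  have hS1 : S 1 = 0 := by
    simp only [hS, pow_one, hA]
    rw [show (t.val : ℝ) = ((t.val : ℕ) : ℝ) from rfl]
    rw [aux_cos_sum N t.val ha1 φ, mul_zero]
  have hS2 : S 2 = 1 / 2 := by
    have key : ∑ n : ZMod N, Real.cos (2 * Real.pi * n.val * (2 * t.val : ℕ) / N - 2 * φ)
        = 0 := aux_cos_sum N (2 * t.val) ha2 (2 * φ)
    have hterm : ∀ n : ZMod N, (A n) ^ 2
        = 1 / 2 + Real.cos (2 * Real.pi * n.val * (2 * t.val : ℕ) / N - 2 * φ) / 2 := by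
      intro n
      rw [hA, Real.cos_sq]
      congr 2
      push_cast
      ring
    rw [hS]
    simp only [hterm]
    rw [Finset.sum_add_distrib, Finset.sum_const, Finset.card_univ, ZMod.card,
      ← Finset.sum_div, key]
    field_simp
    rw [nsmul_eq_mul]; ring
  have hS3 : S 3 = 0 := by
    have key3 : ∑ n : ZMod N, Real.cos (2 * Real.pi * n.val * (3 * t.val : ℕ) / N - 3 * φ)
        = 0 := aux_cos_sum N (3 * t.val) ha3 (3 * φ)
    have key1 : ∑ n : ZMod N, A n = 0 := by
      simp only [hA]
      exact aux_cos_sum N t.val ha1 φ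
    have hterm : ∀ n : ZMod N, (A n) ^ 3
        = (Real.cos (2 * Real.pi * n.val * (3 * t.val : ℕ) / N - 3 * φ) + 3 * A n) / 4 := by
      intro n
      have h3 : Real.cos (3 * (2 * Real.pi * n.val * t.val / N - φ))
          = 4 * (A n) ^ 3 - 3 * A n := Real.cos_three_mul _
      have harg : 3 * (2 * Real.pi * n.val * t.val / N - φ)
          = 2 * Real.pi * n.val * (3 * t.val : ℕ) / N - 3 * φ := by push_cast; ring
      rw [harg] at h3
      rw [h3]; ring
    rw [hS]
    simp only [hterm]
    rw [← Finset.sum_div, Finset.sum_add_distrib, key3, ← Finset.mul_sum, key1]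
    simp
  have hSle : ∀ k, |S k| ≤ 1 := by
    intro k
    rw [hS]
    have h1 : |∑ n : ZMod N, (A n) ^ k| ≤ ∑ n : ZMod N, (1 : ℝ) := by
      refine (Finset.abs_sum_le_sum_abs _ _).trans (Finset.sum_le_sum fun n _ => ?_)
      rw [abs_pow]
      exact pow_le_one₀ (abs_nonneg _) (Real.abs_cos_le_one _)
    rw [abs_mul, abs_of_nonneg (by positivity : (0:ℝ) ≤ 1 / (N:ℝ))]
    calc (1 / (N:ℝ)) * |∑ n : ZMod N, (A n) ^ k|
        ≤ (1 / N) * ∑ n : ZMod N, (1:ℝ) := by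
          exact mul_le_mul_of_nonneg_left h1 (by positivity)
      _ = 1 := by
          rw [Finset.sum_const, Finset.card_univ, ZMod.card]
          field_simp
          rw [nsmul_eq_mul, mul_one]
  -- series expansion of exp
  have hexp : ∀ x : ℝ, Real.exp x = ∑' k : ℕ, x ^ k / (Nat.factorial k) := by
    intro x
    rw [Real.exp_eq_exp_ℝ, NormedSpace.exp_eq_tsum_div]
  -- the coefficient sequence
  set a : ℕ → ℝ := fun k => u ^ k / (Nat.factorial k) * S k with ha
  set g : ℕ → ℝ := fun k =>
    if k = 0 then 1 else if k = 2 then u ^ 2 / 4 else if k < 4 then 0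
      else u ^ k / (Nat.factorial k) with hg
  have hsummable_base : Summable (fun k : ℕ => u ^ k / (Nat.factorial k)) :=
    Real.summable_pow_div_factorial u
  have habs_a : ∀ k, |a k| ≤ u ^ k / (Nat.factorial k) := by
    intro k
    rw [ha, abs_mul, abs_of_nonneg (by positivity : (0:ℝ) ≤ u ^ k / (Nat.factorial k))]
    nth_rewrite 2 [show (u ^ k / (Nat.factorial k) : ℝ)
      = u ^ k / (Nat.factorial k) * 1 by ring]
    exact mul_le_mul_of_nonneg_left (hSle k) (by positivity)
  have hsum_a : Summable a :=
    Summable.of_norm_bounded hsummable_base (fun k => habs_a k)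
  have habs_g : ∀ k, |g k| ≤ u ^ k / (Nat.factorial k) := by
    intro k
    rcases Nat.eq_zero_or_pos k with rfl | hk
    · norm_num [hg]
    have hk0 : ¬ k = 0 := Nat.pos_iff_ne_zero.1 hk
    by_cases h2 : k = 2
    · subst h2
      simp only [hg]
      norm_num [Nat.factorial]
      rw [abs_of_nonneg (by positivity : (0:ℝ) ≤ u ^ 2 / 4)]
      nlinarith [sq_nonneg u]
    by_cases h4 : k < 4
    · simp only [hg]
      rw [if_neg hk0, if_neg h2, if_pos h4, abs_zero]
      positivity
    · simp only [hg]
      rw [if_neg hk0, if_neg h2, if_neg h4]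
      rw [abs_of_nonneg (by positivity)]
  have hsum_g : Summable g :=
    Summable.of_norm_bounded hsummable_base (fun k => habs_g k)
  -- rewrite LHS
  have hswap : ((1 : ℝ) / N) * ∑ n : ZMod N, Real.exp (u * A n) = ∑' k, a k := by
    have h1 : ∀ n : ZMod N, Real.exp (u * A n)
        = ∑' k : ℕ, (u * A n) ^ k / (Nat.factorial k) := fun n => hexp _
    simp only [h1]
    rw [← Summable.tsum_finsetSum (fun n _ => Real.summable_pow_div_factorial (u * A n)),
      ← tsum_mul_left]
    congr 1
    funext k
    simp only [ha, hS, mul_pow]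
    rw [← Finset.sum_div, ← Finset.mul_sum]
    ring
  have hbound : ∀ k, a k ≤ g k := by
    intro k
    rcases Nat.eq_zero_or_pos k with rfl | hk
    · simp [ha, hg, hS0]
    have hk0 : ¬ k = 0 := Nat.pos_iff_ne_zero.1 hk
    by_cases h1 : k = 1
    · subst h1
      simp only [ha, hg]
      rw [hS1, mul_zero]
      norm_num
    by_cases h2 : k = 2
    · subst h2
      simp only [ha, hg]
      rw [hS2]
      norm_num [Nat.factorial]
      nlinarith [sq_nonneg u]
    by_cases h3 : k = 3
    · subst h3
      simp only [ha, hg]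
      rw [hS3, mul_zero]
      norm_num
    · have h4 : ¬ k < 4 := by omega
      simp only [ha, hg]
      rw [if_neg hk0, if_neg h2, if_neg h4]
      nth_rewrite 2 [show (u ^ k / (Nat.factorial k) : ℝ)
        = u ^ k / (Nat.factorial k) * 1 by ring]
      exact mul_le_mul_of_nonneg_left (le_trans (le_abs_self _) (hSle k)) (by positivity)
  -- compute tsum g
  have htsum_g : ∑' k, g k
      = 1 + u ^ 2 / 4 + ∑' k : ℕ, u ^ (k + 4) / (Nat.factorial (k + 4)) := by
    rw [← Summable.sum_add_tsum_nat_add 4 hsum_g]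
    have h1 : ∑ k ∈ range 4, g k = 1 + u ^ 2 / 4 := by
      norm_num [hg, Finset.sum_range_succ]
    have h2 : ∀ k : ℕ, g (k + 4) = u ^ (k + 4) / (Nat.factorial (k + 4)) := by
      intro k
      simp only [hg]
      rw [if_neg (by omega : ¬ k + 4 = 0), if_neg (by omega : ¬ k + 4 = 2),
        if_neg (by omega : ¬ k + 4 < 4)]
    rw [h1, tsum_congr h2]
  calc ((1 : ℝ) / N) * ∑ n : ZMod N, Real.exp (u * A n)
      = ∑' k, a k := hswap
    _ ≤ ∑' k, g k := Summable.tsum_le_tsum hbound hsum_a hsum_g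
    _ = _ := htsum_g
end

section
/- For every real a ∈ (0,1] and integer s ≥ 1, setting u = (a/s)·(1 + a²/s²)^{−1}, one has −au/(2s) + a²u²/(8s²) + u²/4 + ∑_{k ≥ 4} uᵏ/k! < −(a²/(4s²))·(1 + a²/s²)^{−1}. -/
set_option maxHeartbeats 1000000 in
/-- The optimization of the Chernoff exponent in variant V2: for `a ∈ (0,1]`,
`s ≥ 1` and `u = (a/s)(1 + a²/s²)⁻¹`,
`−au/(2s) + a²u²/(8s²) + u²/4 + ∑_{k≥4} uᵏ/k! < −(a²/(4s²))(1 + a²/s²)⁻¹`. -/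
theorem stmt12 (a : ℝ) (ha : 0 < a) (ha1 : a ≤ 1) (s : ℕ) (hs : 1 ≤ s)
    (u : ℝ) (hu : u = (a / s) * (1 + a ^ 2 / (s : ℝ) ^ 2)⁻¹) :
    -a * u / (2 * s) + a ^ 2 * u ^ 2 / (8 * (s : ℝ) ^ 2) + u ^ 2 / 4 +
        ∑' k : ℕ, u ^ (k + 4) / (Nat.factorial (k + 4))
      < -(a ^ 2 / (4 * (s : ℝ) ^ 2)) * (1 + a ^ 2 / (s : ℝ) ^ 2)⁻¹ := by
  have hs0 : (1:ℝ) ≤ (s:ℝ) := by exact_mod_cast hs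
  have hsp : (0:ℝ) < s := by linarith
  obtain ⟨t, htdef⟩ : ∃ t : ℝ, t = a / s := ⟨_, rfl⟩
  rw [show (a / (s:ℝ)) = t from htdef.symm] at hu
  have ht0 : 0 < t := by rw [htdef]; exact div_pos ha hsp
  have ht1 : t ≤ 1 := by rw [htdef, div_le_one hsp]; linarith
  have hat2 : a ^ 2 / (s:ℝ) ^ 2 = t ^ 2 := by rw [htdef, div_pow]
  have hD : (0:ℝ) < 1 + t ^ 2 := by positivity
  rw [hat2] at hu ⊢
  have hu0 : 0 < u := by rw [hu]; positivity
  have huD : u * (1 + t ^ 2) = t := by rw [hu]; field_simp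
  have hut : u ≤ t := by nlinarith [sq_nonneg t]
  have hu2 : u ≤ 1/2 := by nlinarith [sq_nonneg (t - 1)]
  have hlt1 : u < 1 := by linarith
  -- tail bound
  have hsum1 : Summable (fun k : ℕ => u ^ (k + 4) / (Nat.factorial (k + 4) : ℝ)) := by
    have h := Real.summable_pow_div_factorial u
    exact h.comp_injective (add_left_injective 4)
  have hsum2 : Summable (fun k : ℕ => u ^ 4 / 24 * u ^ k) :=
    (summable_geometric_of_lt_one hu0.le hlt1).mul_left _
  have hterm : ∀ k : ℕ, u ^ (k + 4) / (Nat.factorial (k + 4) : ℝ) ≤ u ^ 4 / 24 * u ^ k := by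
    intro k
    have hfac : (24:ℝ) ≤ (Nat.factorial (k + 4) : ℝ) := by
      have : 24 ≤ Nat.factorial (k + 4) := by
        calc 24 = Nat.factorial 4 := rfl
          _ ≤ _ := Nat.factorial_le (by omega)
      exact_mod_cast this
    have h1 : u ^ 4 / 24 * u ^ k = u ^ (k + 4) / 24 := by ring
    rw [h1]
    gcongr
  have htail : (∑' k : ℕ, u ^ (k + 4) / (Nat.factorial (k + 4) : ℝ)) ≤ u ^ 4 / 12 := by
    have h1 : (∑' k : ℕ, u ^ (k + 4) / (Nat.factorial (k + 4) : ℝ))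
        ≤ ∑' k : ℕ, u ^ 4 / 24 * u ^ k := Summable.tsum_le_tsum hterm hsum1 hsum2
    have h2 : (∑' k : ℕ, u ^ 4 / 24 * u ^ k) = u ^ 4 / 24 * (1 - u)⁻¹ := by
      rw [tsum_mul_left, tsum_geometric_of_lt_one hu0.le hlt1]
    have h30 : (0:ℝ) < 1 - u := by linarith
    have h3 : (1 - u)⁻¹ ≤ 2 := by
      rw [inv_le_comm₀ h30 (by norm_num)]
      linarith
    have h4 : u ^ 4 / 24 * (1 - u)⁻¹ ≤ u ^ 4 / 12 := by
      nlinarith [pow_nonneg hu0.le 4, inv_nonneg.mpr h30.le]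
    linarith
  -- rewrite everything in terms of t, u
  have hinv : (1 + t ^ 2)⁻¹ = u / t := by
    field_simp
    nlinarith [huD]
  have hL1 : -a * u / (2 * s) = -(t * u) / 2 := by
    rw [htdef]; field_simp
  have hL2 : a ^ 2 * u ^ 2 / (8 * (s:ℝ) ^ 2) = t ^ 2 * u ^ 2 / 8 := by
    rw [htdef]; field_simp
  have hR : -(a ^ 2 / (4 * (s:ℝ) ^ 2)) * (1 + t ^ 2)⁻¹ = -(t * u) / 4 := by
    rw [hinv, htdef]; field_simp
  rw [hL1, hL2, hR]
  have key : -(t * u) / 2 + t ^ 2 * u ^ 2 / 8 + u ^ 2 / 4 + u ^ 4 / 12 < -(t * u) / 4 := by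
    have h5 : t * u = u ^ 2 + u ^ 2 * t ^ 2 := by linear_combination (-u) * huD
    have h6 : u ^ 2 ≤ t ^ 2 := pow_le_pow_left₀ hu0.le hut 2
    have h7 : u ^ 4 ≤ u ^ 2 * t ^ 2 := by
      have := mul_le_mul_of_nonneg_left h6 (sq_nonneg u)
      nlinarith [this]
    have h8 : 0 < u ^ 2 * t ^ 2 := by positivity
    linarith
  linarith
end

section
/- Let Ω be a random subset of ℤ/Nℤ obtained by independent selection of each element with probability τ, where N is not divisible by 2 or 3, and let K(t) = ∑_{ω ∈ Ω} e^{2πiωt/N}. Then for each fixed t ≠ 0, each φ ∈ ℝ, and each s ≥ 1, with a = cos(π/ν) for an integer ν ≥ 3, P(Re(K(t)e^{−iφ}) ≥ (a/(2s))K(0)) ≤ exp(−τN a²/(4(s² + a²))). -/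
open MeasureTheory Finset

section Aux

lemma taylor4' (x : ℝ) (hx : |x| ≤ 3/2) :
    Real.exp x ≤ 1 + x + x^2/2 + x^3/6 + x^4/12 := by
  set u := x/2 with hu
  have hu34 : |u| ≤ 3/4 := by rw [hu, abs_div]; rw [abs_of_nonneg (by norm_num : (0:ℝ) ≤ 2)]; linarith
  have hu1 : |u| ≤ 1 := hu34.trans (by norm_num)
  have h := Real.exp_bound hu1 (n := 4) (by norm_num)
  have hsum : ∑ m ∈ Finset.range 4, u ^ m / (m.factorial : ℝ)
      = 1 + u + u^2/2 + u^3/6 := by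
    rw [Finset.sum_range_succ, Finset.sum_range_succ, Finset.sum_range_succ,
      Finset.sum_range_succ, Finset.sum_range_zero]
    norm_num [Nat.factorial]
  rw [hsum] at h
  have habs : |u| ^ 4 = u ^ 4 := by
    rw [← abs_pow, abs_of_nonneg (by positivity)]
  have h2 : Real.exp u ≤ 1 + u + u^2/2 + u^3/6 + (5/96) * u^4 := by
    have h' := (abs_sub_le_iff.1 h).1
    rw [habs] at h'
    norm_num [Nat.factorial] at h'
    linarith
  have hx2 : Real.exp x = Real.exp u ^ 2 := by
    rw [← Real.exp_nat_mul]
    congr 1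
    rw [hu]; push_cast; ring
  have hgpos : 0 < Real.exp u := Real.exp_pos u
  have hsq : Real.exp u ^ 2 ≤ (1 + u + u^2/2 + u^3/6 + (5/96) * u^4) ^ 2 :=
    pow_le_pow_left₀ hgpos.le h2 2
  rw [hx2]
  refine hsq.trans ?_
  have hxu : x = 2 * u := by rw [hu]; ring
  have hub : u^2 ≤ 9/16 := by
    nlinarith [sq_abs u, hu34, abs_nonneg u]
  rw [hxu]
  nlinarith [sq_nonneg u, sq_nonneg (u^2), sq_nonneg (u + u^2), sq_nonneg (u - u^2),
    sq_nonneg (u^3), sq_nonneg (u^2 - u^3), sq_nonneg (u^2 + u^3), sq_nonneg (u*(1-u)),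
    mul_nonneg (mul_nonneg (sq_nonneg u) (sq_nonneg u)) (sq_nonneg u)]

lemma expsum_zero' (N m : ℕ) [NeZero N] (hm : ¬ N ∣ m) :
    ∑ n : ZMod N, Complex.exp (2*Real.pi*Complex.I*((n.val : ℂ)*m)/N) = 0 := by
  have hN : (N : ℂ) ≠ 0 := Nat.cast_ne_zero.2 (NeZero.ne N)
  set x : ℂ := Complex.exp (2*Real.pi*Complex.I*m/N) with hx
  have hterm : ∀ j : ℕ, Complex.exp (2*Real.pi*Complex.I*((j : ℂ)*m)/N) = x ^ j := by
    intro j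
    rw [hx, ← Complex.exp_nat_mul]
    congr 1; ring
  have hx1 : x ≠ 1 := by
    intro hx1
    rw [hx, Complex.exp_eq_one_iff] at hx1
    obtain ⟨k, hk⟩ := hx1
    have h2πI : (2*Real.pi*Complex.I : ℂ) ≠ 0 := by
      simp [Complex.I_ne_zero, Real.pi_ne_zero]
    have : (m : ℂ) = k * N := by
      field_simp at hk
      have := hk
      have h3 : (2*Real.pi*Complex.I) * (m : ℂ) = (2*Real.pi*Complex.I) * ((k : ℂ) * N) := by
        ring_nf
        ring_nf at this
        linear_combination (2*Real.pi*Complex.I) * this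
      exact mul_left_cancel₀ h2πI h3
    have hmk : (m : ℤ) = k * N := by exact_mod_cast this
    exact hm (Int.natCast_dvd_natCast.1 ⟨k, by linarith [hmk]⟩)
  have hsum : ∑ n : ZMod N, Complex.exp (2*Real.pi*Complex.I*((n.val : ℂ)*m)/N)
      = ∑ j ∈ Finset.range N, x ^ j := by
    rw [show (fun n : ZMod N => Complex.exp (2*Real.pi*Complex.I*((n.val:ℂ)*m)/N))
        = fun n : ZMod N => x ^ n.val from funext fun n => hterm n.val] at *
    exact Finset.sum_nbij' (i := fun n => ZMod.val n) (j := fun j => ((j : ℕ) : ZMod N))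
      (fun n _ => Finset.mem_range.2 (ZMod.val_lt n)) (fun j _ => Finset.mem_univ _)
      (fun n _ => ZMod.natCast_rightInverse n)
      (fun j hj => ZMod.val_cast_of_lt (Finset.mem_range.1 hj)) (fun n _ => rfl)
  rw [hsum, geom_sum_eq hx1]
  have hxN : x ^ N = 1 := by
    rw [hx, ← Complex.exp_nat_mul]
    have : (N : ℂ) * (2*Real.pi*Complex.I*m/N) = m * (2*Real.pi*Complex.I) := by
      field_simp
    rw [this, Complex.exp_nat_mul, Complex.exp_two_pi_mul_I, one_pow]
  rw [hxN, sub_self, zero_div]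

lemma cossum_zero' (N m : ℕ) [NeZero N] (hm : ¬ N ∣ m) (c : ℝ) :
    ∑ n : ZMod N, Real.cos (2*Real.pi*((n.val : ℝ)*m)/N + c) = 0 := by
  have key : ∑ n : ZMod N,
      Complex.exp (((2*Real.pi*((n.val : ℝ)*m)/N + c : ℝ) : ℂ) * Complex.I) = 0 := by
    have : ∀ n : ZMod N,
        Complex.exp (((2*Real.pi*((n.val : ℝ)*m)/N + c : ℝ) : ℂ) * Complex.I)
        = Complex.exp (2*Real.pi*Complex.I*((n.val : ℂ)*m)/N) * Complex.exp (c * Complex.I) := by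
      intro n
      rw [← Complex.exp_add]
      congr 1
      push_cast
      ring
    rw [Finset.sum_congr rfl fun n _ => this n, ← Finset.sum_mul, expsum_zero' N m hm,
      zero_mul]
  have := congrArg Complex.re key
  rw [Complex.re_sum] at this
  rw [Complex.zero_re] at this
  rw [← this]
  exact Finset.sum_congr rfl fun n _ => (Complex.exp_ofReal_mul_I_re _).symm

end Aux

set_option maxHeartbeats 1000000 in
/-- Single-point probability bound of variant V2: for a random `Ω` given by
i.i.d. Bernoulli(τ) selectors `Xₙ`, `K(t) = ∑ₙ Xₙ e^{2πint/N}`, `t ≠ 0`,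
`a = cos(π/ν)` with `ν ≥ 3`, and `N` not divisible by 2 or 3,
`P(Re(K(t)e^{−iφ}) ≥ (a/(2s))K(0)) ≤ exp(−τN a²/(4(s² + a²)))`. -/
theorem stmt13 {Ω' : Type*} [MeasurableSpace Ω'] (μ : Measure Ω') [IsProbabilityMeasure μ]
    (N : ℕ) [NeZero N] (hN2 : ¬ (2 ∣ N)) (hN3 : ¬ (3 ∣ N))
    (τ : ℝ) (hτ0 : 0 ≤ τ) (hτ1 : τ ≤ 1)
    (X : ZMod N → Ω' → ℝ) (hX : ∀ n, Measurable (X n))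
    (h01 : ∀ n ω', X n ω' = 0 ∨ X n ω' = 1)
    (h1 : ∀ n, μ {ω' | X n ω' = 1} = ENNReal.ofReal τ)
    (hind : ProbabilityTheory.iIndepFun X μ)
    (t : ZMod N) (ht : t ≠ 0) (φ : ℝ) (s : ℕ) (hs : 1 ≤ s)
    (ν : ℕ) (hν : 3 ≤ ν) (a : ℝ) (ha : a = Real.cos (Real.pi / ν)) :
    μ {ω' | (a / (2 * s)) * ∑ n : ZMod N, X n ω'
          ≤ ((∑ n : ZMod N, (X n ω' : ℂ) *
                Complex.exp (2 * Real.pi * Complex.I * (n.val * t.val) / N)) *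
              Complex.exp (-Complex.I * φ)).re}
      ≤ ENNReal.ofReal
          (Real.exp (-(τ * N) * a ^ 2 / (4 * ((s : ℝ) ^ 2 + a ^ 2)))) := by
  classical
  -- basic positivity facts
  have hNpos : 0 < N := Nat.pos_of_ne_zero (NeZero.ne N)
  have hN1 : (1:ℝ) ≤ N := by exact_mod_cast hNpos
  have hNR : (N:ℝ) ≠ 0 := by positivity
  have hsR : (1:ℝ) ≤ (s:ℝ) := by exact_mod_cast hs
  have hs0 : (0:ℝ) < (s:ℝ) := by linarith
  have ha1 : a ≤ 1 := ha ▸ Real.cos_le_one _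
  have ha0 : 0 < a := by
    rw [ha]
    apply Real.cos_pos_of_mem_Ioo
    constructor
    · have : (0:ℝ) < Real.pi / ν := by positivity
      linarith [Real.pi_pos]
    · have hν' : (3:ℝ) ≤ ν := by exact_mod_cast hν
      have : Real.pi / ν ≤ Real.pi / 3 := by
        apply div_le_div_of_nonneg_left Real.pi_pos.le (by norm_num) hν'
      linarith [Real.pi_pos]
  set b : ℝ := a / (2 * s) with hbdef
  have hb0 : 0 < b := by positivity
  have hb12 : b ≤ 1/2 := by
    rw [hbdef, div_le_iff₀ (by positivity)]
    nlinarith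
  -- angles and cosines
  set θ : ZMod N → ℝ := fun n => 2*Real.pi*((n.val : ℝ)*(t.val : ℝ))/N - φ with hθdef
  set c : ZMod N → ℝ := fun n => Real.cos (θ n) with hcdef
  set d : ZMod N → ℝ := fun n => c n - b with hddef
  -- divisibility facts
  have hu2 : IsUnit (2 : ZMod N) := by
    have h := (ZMod.isUnit_iff_coprime 2 N).2
      ((Nat.Prime.coprime_iff_not_dvd Nat.prime_two).2 hN2)
    simpa using h
  have hu3 : IsUnit (3 : ZMod N) := by
    have h := (ZMod.isUnit_iff_coprime 3 N).2
      ((Nat.Prime.coprime_iff_not_dvd Nat.prime_three).2 hN3)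
    simpa using h
  have hndvd : ∀ k : ℕ, (k : ZMod N) * t ≠ 0 → ¬ N ∣ (k * t.val) := by
    intro k hk h
    apply hk
    have : ((k * t.val : ℕ) : ZMod N) = 0 := (ZMod.natCast_eq_zero_iff _ _).2 h
    push_cast at this
    rwa [ZMod.natCast_rightInverse t] at this
  have hkt : ∀ k : ℕ, IsUnit ((k : ZMod N)) → ¬ N ∣ (k * t.val) := fun k hk =>
    hndvd k (fun h => ht ((hk.mul_right_eq_zero).1 h))
  have hd1 : ¬ N ∣ (1 * t.val) := hkt 1 (by simp)
  have hd2 : ¬ N ∣ (2 * t.val) := hkt 2 (by push_cast; exact hu2)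
  have hd3 : ¬ N ∣ (3 * t.val) := hkt 3 (by push_cast; exact hu3)
  have hd4 : ¬ N ∣ (4 * t.val) := hkt 4 (by
    push_cast
    have : ((4 : ℕ) : ZMod N) = 2 * 2 := by push_cast; ring
    rw [show ((4 : ZMod N)) = 2 * 2 by norm_num]
    exact hu2.mul hu2)
  -- cosine moment sums
  have hcosk : ∀ k : ℕ, ¬ N ∣ (k * t.val) →
      ∑ n : ZMod N, Real.cos ((k:ℝ) * θ n) = 0 := by
    intro k hk
    have h := cossum_zero' N (k * t.val) hk (-(k * φ))
    rw [← h]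
    apply Finset.sum_congr rfl
    intro n _
    congr 1
    rw [hθdef]
    push_cast
    field_simp
    ring
  have hS1 : ∑ n : ZMod N, c n = 0 := by
    have h := hcosk 1 hd1
    simpa using h
  have hS2 : ∑ n : ZMod N, (c n)^2 = N/2 := by
    have h := hcosk 2 hd2
    have hpt : ∀ n : ZMod N, (c n)^2 = 1/2 + Real.cos ((2:ℝ) * θ n)/2 := by
      intro n
      rw [hcdef]
      exact Real.cos_sq (θ n)
    rw [Finset.sum_congr rfl fun n _ => hpt n, Finset.sum_add_distrib,
      Finset.sum_const, Finset.card_univ, ZMod.card, ← Finset.sum_div]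
    push_cast at h ⊢
    rw [h]
    ring
  have hS3 : ∑ n : ZMod N, (c n)^3 = 0 := by
    have h3 := hcosk 3 hd3
    have h1 := hS1
    have hpt : ∀ n : ZMod N, (c n)^3 = (Real.cos ((3:ℝ) * θ n) + 3 * c n)/4 := by
      intro n
      have := Real.cos_three_mul (θ n)
      rw [hcdef]
      push_cast at this ⊢
      linarith [this]
    rw [Finset.sum_congr rfl fun n _ => hpt n, ← Finset.sum_div, Finset.sum_add_distrib,
      ← Finset.mul_sum]
    push_cast at h3
    rw [h3, h1]
    ring
  have hS4 : ∑ n : ZMod N, (c n)^4 = 3*N/8 := by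
    have h2 := hcosk 2 hd2
    have h4 := hcosk 4 hd4
    have hpt : ∀ n : ZMod N, (c n)^4
        = 3/8 + Real.cos ((2:ℝ) * θ n)/2 + Real.cos ((4:ℝ) * θ n)/8 := by
      intro n
      have e1 : (c n)^2 = 1/2 + Real.cos (2 * θ n)/2 := by
        rw [hcdef]; exact Real.cos_sq (θ n)
      have e2 : (Real.cos (2 * θ n))^2 = 1/2 + Real.cos (4 * θ n)/2 := by
        have := Real.cos_sq (2 * θ n)
        rw [show 2 * (2 * θ n) = 4 * θ n by ring] at this
        exact this
      nlinarith [e1, e2]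
    rw [Finset.sum_congr rfl fun n _ => hpt n, Finset.sum_add_distrib,
      Finset.sum_add_distrib, Finset.sum_const, Finset.card_univ, ZMod.card,
      ← Finset.sum_div, ← Finset.sum_div]
    push_cast at h2 h4 ⊢
    rw [h2, h4]
    ring
  -- λ
  set lam : ℝ := 2 * b with hlamdef
  have hlam0 : 0 ≤ lam := by positivity
  -- pointwise exponential bound and sum bound
  have hdabs : ∀ n : ZMod N, |d n| ≤ 1 + b := by
    intro n
    rw [hddef]
    have h1 := Real.neg_one_le_cos (θ n)
    have h2 := Real.cos_le_one (θ n)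
    rw [abs_le]
    constructor <;> simp only [hcdef] <;> [linarith; linarith]
  have hexp_pt : ∀ n : ZMod N, Real.exp (lam * d n)
      ≤ 1 + (lam * d n) + (lam * d n)^2/2 + (lam * d n)^3/6 + (lam * d n)^4/12 := by
    intro n
    apply taylor4'
    rw [abs_mul, abs_of_nonneg hlam0]
    calc lam * |d n| ≤ (2*b) * (1+b) := by
          apply mul_le_mul_of_nonneg_left (hdabs n) hlam0
      _ ≤ 3/2 := by nlinarith
  have hsum_exp : ∑ n : ZMod N, Real.exp (lam * d n)
      ≤ (N:ℝ) * (1 - b^2/(1+4*b^2)) := by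
    have hexpand : ∀ n : ZMod N,
        1 + (lam * d n) + (lam * d n)^2/2 + (lam * d n)^3/6 + (lam * d n)^4/12
        = (1 - 2*b^2 + 2*b^4 - (4/3)*b^6 + (4/3)*b^8)
          + (2*b - 4*b^3 + 4*b^5 - (16/3)*b^7) * c n
          + (2*b^2 - 4*b^4 + 8*b^6) * (c n)^2
          + ((4/3)*b^3 - (16/3)*b^5) * (c n)^3
          + ((4/3)*b^4) * (c n)^4 := by
      intro n
      rw [hlamdef, hddef]
      ring
    have hsum1 : ∑ n : ZMod N, Real.exp (lam * d n)
        ≤ ∑ n : ZMod N,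
          ((1 - 2*b^2 + 2*b^4 - (4/3)*b^6 + (4/3)*b^8)
          + (2*b - 4*b^3 + 4*b^5 - (16/3)*b^7) * c n
          + (2*b^2 - 4*b^4 + 8*b^6) * (c n)^2
          + ((4/3)*b^3 - (16/3)*b^5) * (c n)^3
          + ((4/3)*b^4) * (c n)^4) := by
      apply Finset.sum_le_sum
      intro n _
      rw [← hexpand n]
      exact hexp_pt n
    rw [Finset.sum_add_distrib, Finset.sum_add_distrib, Finset.sum_add_distrib,
      Finset.sum_add_distrib, Finset.sum_const, Finset.card_univ, ZMod.card,
      ← Finset.mul_sum, ← Finset.mul_sum, ← Finset.mul_sum, ← Finset.mul_sum,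
      hS1, hS2, hS3, hS4] at hsum1
    simp only [nsmul_eq_mul] at hsum1
    refine hsum1.trans ?_
    have hden : (0:ℝ) < 1 + 4*b^2 := by positivity
    rw [← sub_nonneg]
    have key : (N:ℝ) * (1 - b^2/(1+4*b^2))
        - ((N:ℝ) * (1 - 2*b^2 + 2*b^4 - (4/3)*b^6 + (4/3)*b^8)
          + (2*b - 4*b^3 + 4*b^5 - (16/3)*b^7) * 0
          + (2*b^2 - 4*b^4 + 8*b^6) * ((N:ℝ)/2)
          + ((4/3)*b^3 - (16/3)*b^5) * 0
          + ((4/3)*b^4) * (3*(N:ℝ)/8))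
        = (N:ℝ) * ((b^2 - b^4/2 - (8/3)*b^6 - (4/3)*b^8) - b^2/(1+4*b^2)) := by
      ring
    rw [key]
    apply mul_nonneg (by positivity)
    rw [sub_nonneg, div_le_iff₀ hden]
    have hb2 : b^2 ≤ 1/4 := by nlinarith
    have p4 : (0:ℝ) ≤ b^4 := by positivity
    have p6 : (0:ℝ) ≤ b^6 := by positivity
    have p8 : (0:ℝ) ≤ b^8 := by positivity
    nlinarith [mul_le_mul_of_nonneg_left hb2 p4, mul_le_mul_of_nonneg_left hb2 p6,
      mul_le_mul_of_nonneg_left hb2 p8]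
  -- random variables
  set Z : ZMod N → Ω' → ℝ := fun n ω => X n ω * d n with hZdef
  have hZmeas : ∀ n, Measurable (Z n) := fun n => (hX n).mul_const _
  have hindZ : ProbabilityTheory.iIndepFun Z μ := by
    have h := hind.comp (g := fun n (y : ℝ) => y * d n)
      (fun n => measurable_id.mul_const _)
    exact h
  have hAmeas : ∀ n, MeasurableSet {ω' | X n ω' = 1} :=
    fun n => hX n (measurableSet_singleton 1)
  have hXind : ∀ n, X n = Set.indicator {ω' | X n ω' = 1} (fun _ => (1:ℝ)) := by
    intro n; funext ω
    rcases h01 n ω with h | h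
    · simp only [Set.indicator_apply, Set.mem_setOf_eq, h]
      norm_num
    · simp only [Set.indicator_apply, Set.mem_setOf_eq, h]
      norm_num
  have hXint : ∀ n, Integrable (X n) μ := by
    intro n; rw [hXind n]; exact (integrable_const 1).indicator (hAmeas n)
  have hXmean : ∀ n, ∫ ω, X n ω ∂μ = τ := by
    intro n
    have heq : ∫ ω, X n ω ∂μ
        = ∫ ω, Set.indicator {ω' | X n ω' = 1} (fun _ => (1:ℝ)) ω ∂μ := by
      congr 1
      exact hXind n
    rw [heq, MeasureTheory.integral_indicator_const _ (hAmeas n), measureReal_def, h1 n,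
      ENNReal.toReal_ofReal hτ0, smul_eq_mul, mul_one]
  have hgrw : ∀ n, (fun ω => Real.exp (lam * Z n ω))
      = fun ω => 1 + (Real.exp (lam * d n) - 1) * X n ω := by
    intro n; funext ω
    rcases h01 n ω with h | h
    · simp only [hZdef, h, zero_mul, mul_zero, Real.exp_zero]
      ring
    · simp only [hZdef, h, one_mul, mul_one]
      ring
  have hZint : ∀ n, Integrable (fun ω => Real.exp (lam * Z n ω)) μ := by
    intro n; rw [hgrw n]
    exact (integrable_const 1).add ((hXint n).const_mul _)
  have hmgfZ : ∀ n, ProbabilityTheory.mgf (Z n) μ lam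
      = 1 + (Real.exp (lam * d n) - 1) * τ := by
    intro n
    have : ProbabilityTheory.mgf (Z n) μ lam
        = ∫ ω, (1 + (Real.exp (lam * d n) - 1) * X n ω) ∂μ := by
      unfold ProbabilityTheory.mgf
      rw [← hgrw n]
    rw [this, integral_add (integrable_const 1) ((hXint n).const_mul _),
      integral_const, measureReal_def, measure_univ, ENNReal.toReal_one, one_smul,
      MeasureTheory.integral_const_mul, hXmean n]
  -- Y and the event
  set Y : Ω' → ℝ := ∑ n : ZMod N, Z n with hYdef
  have hYapp : ∀ ω, Y ω = ∑ n : ZMod N, X n ω * d n := by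
    intro ω
    rw [hYdef, Finset.sum_apply]
  have hre : ∀ ω : Ω', ((∑ n : ZMod N, (X n ω : ℂ) *
        Complex.exp (2 * Real.pi * Complex.I * (n.val * t.val) / N)) *
        Complex.exp (-Complex.I * φ)).re = ∑ n : ZMod N, X n ω * c n := by
    intro ω
    rw [Finset.sum_mul, Complex.re_sum]
    apply Finset.sum_congr rfl
    intro n _
    have key : (X n ω : ℂ) *
        Complex.exp (2 * Real.pi * Complex.I * (n.val * t.val) / N) *
        Complex.exp (-Complex.I * φ)
        = (X n ω : ℂ) * Complex.exp (((θ n : ℝ) : ℂ) * Complex.I) := by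
      rw [mul_assoc, ← Complex.exp_add]
      congr 2
      simp only [hθdef]
      push_cast
      ring
    rw [key, Complex.re_ofReal_mul, Complex.exp_ofReal_mul_I_re]
  have hset : {ω' | b * ∑ n : ZMod N, X n ω'
        ≤ ((∑ n : ZMod N, (X n ω' : ℂ) *
            Complex.exp (2 * Real.pi * Complex.I * (n.val * t.val) / N)) *
          Complex.exp (-Complex.I * φ)).re}
      = {ω' | (0:ℝ) ≤ Y ω'} := by
    ext ω
    simp only [Set.mem_setOf_eq, hre ω, hYapp ω]
    have hid : ∑ n : ZMod N, X n ω * d n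
        = ∑ n : ZMod N, X n ω * c n - b * ∑ n : ZMod N, X n ω := by
      rw [Finset.mul_sum, ← Finset.sum_sub_distrib]
      exact Finset.sum_congr rfl fun n _ => by simp only [hddef]; ring
    rw [hid, le_sub_iff_add_le, zero_add]
  -- Chernoff bound
  have hYint : Integrable (fun ω => Real.exp (lam * Y ω)) μ :=
    hindZ.integrable_exp_mul_sum hZmeas (fun n _ => hZint n)
  have hch := ProbabilityTheory.measure_ge_le_exp_mul_mgf (μ := μ) (X := Y) 0 hlam0 hYint
  rw [mul_zero, Real.exp_zero, one_mul] at hch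
  have hmgf_prod : ProbabilityTheory.mgf Y μ lam
      = ∏ n : ZMod N, ProbabilityTheory.mgf (Z n) μ lam :=
    hindZ.mgf_sum hZmeas Finset.univ
  have hprod_le : ∏ n : ZMod N, ProbabilityTheory.mgf (Z n) μ lam
      ≤ Real.exp (∑ n : ZMod N, (Real.exp (lam * d n) - 1) * τ) := by
    rw [Real.exp_sum]
    rw [Finset.prod_congr rfl fun n _ => hmgfZ n]
    apply Finset.prod_le_prod
    · intro n _
      nlinarith [Real.exp_pos (lam * d n)]
    · intro n _
      linarith [Real.add_one_le_exp ((Real.exp (lam * d n) - 1) * τ)]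
  have hsub : ∑ n : ZMod N, (Real.exp (lam * d n) - 1)
      ≤ -((N:ℝ) * (b^2/(1+4*b^2))) := by
    rw [Finset.sum_sub_distrib, Finset.sum_const, Finset.card_univ, ZMod.card,
      nsmul_eq_mul, mul_one]
    have := hsum_exp
    nlinarith []
  have hfrac : b^2/(1+4*b^2) = a^2 / (4 * ((s:ℝ)^2 + a^2)) := by
    rw [hbdef]
    have h1 : (2 * (s:ℝ)) ≠ 0 := by positivity
    have h2 : (0:ℝ) < (s:ℝ)^2 + a^2 := by positivity
    field_simp
    ring
  have hfinal : Real.exp (∑ n : ZMod N, (Real.exp (lam * d n) - 1) * τ)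
      ≤ Real.exp (-(τ * N) * a ^ 2 / (4 * ((s : ℝ) ^ 2 + a ^ 2))) := by
    apply Real.exp_le_exp.2
    have hcomm : ∑ n : ZMod N, (Real.exp (lam * d n) - 1) * τ
        = τ * ∑ n : ZMod N, (Real.exp (lam * d n) - 1) := by
      rw [Finset.mul_sum]
      exact Finset.sum_congr rfl fun n _ => mul_comm _ _
    rw [hcomm]
    have h2 : τ * ∑ n : ZMod N, (Real.exp (lam * d n) - 1)
        ≤ τ * -((N:ℝ) * (b^2/(1+4*b^2))) := mul_le_mul_of_nonneg_left hsub hτ0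
    refine h2.trans (le_of_eq ?_)
    rw [hfrac]
    ring
  rw [hset]
  have htoReal : (μ {ω' | (0:ℝ) ≤ Y ω'}).toReal
      ≤ Real.exp (-(τ * N) * a ^ 2 / (4 * ((s : ℝ) ^ 2 + a ^ 2))) :=
    hch.trans (by rw [hmgf_prod]; exact hprod_le.trans hfinal)
  exact (ENNReal.le_ofReal_iff_toReal_le (measure_ne_top μ _)
    (Real.exp_pos _).le).2 htoReal
end

section
/- Let Ω be obtained by independent selection of each element of ℤ/Nℤ with probability τ, where N ≥ 2 is not divisible by 2 or 3, and let K(t) = ∑_{ω ∈ Ω} e^{2πiωt/N}. Fix s ≥ 1, an integer ν ≥ 3, and set a = cos(π/ν). If τN = 4C(s² + 1)log N with C > 1, then the probability that |K(t)| ≥ K(0)/(2s) for some t ≠ 0 is at most ν N^{1 − Ca²}, i.e. P(∀ t ≠ 0, |K(t)| < K(0)/(2s)) > 1 − ν N^{−(Ca² − 1)}. -/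
open MeasureTheory Finset


open MeasureTheory Finset ProbabilityTheory
open scoped ENNReal NNReal

lemma sum_pow_val {m : ℕ} (x : ℂ) (hx : x ^ (m+1) = 1) (hx1 : x ≠ 1) :
    ∑ n : ZMod (m+1), x ^ (ZMod.val n) = 0 := by
  have h : ∑ n : ZMod (m+1), x ^ (ZMod.val n) = ∑ i ∈ Finset.range (m+1), x ^ i :=
    Fin.sum_univ_eq_sum_range (fun i => x ^ i) (m+1)
  rw [h, geom_sum_eq hx1, hx, sub_self, zero_div]

lemma pow_mod_cycle {N : ℕ} (x : ℂ) (hx : x ^ N = 1) (c : ℕ) : x ^ c = x ^ (c % N) := by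
  conv_lhs => rw [← Nat.div_add_mod c N]
  rw [pow_add, pow_mul, hx, one_pow, one_mul]

lemma pow_congr_mod {N : ℕ} (x : ℂ) (hx : x ^ N = 1) {a b : ℕ} (h : a ≡ b [MOD N]) :
    x ^ a = x ^ b := by
  rw [pow_mod_cycle x hx a, pow_mod_cycle x hx b, h]

lemma exp_base_pow {N : ℕ} (hN : N ≠ 0) :
    (Complex.exp (2 * Real.pi * Complex.I / N)) ^ N = 1 := by
  rw [← Complex.exp_nat_mul]
  have : (N : ℂ) ≠ 0 := Nat.cast_ne_zero.mpr hN
  rw [show (N : ℂ) * (2 * Real.pi * Complex.I / N) = 2 * Real.pi * Complex.I by field_simp]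
  exact Complex.exp_two_pi_mul_I

lemma exp_ne_one {N r : ℕ} (h0 : 0 < r) (hr : r < N) :
    Complex.exp (2 * Real.pi * Complex.I * r / N) ≠ 1 := by
  intro h
  rw [Complex.exp_eq_one_iff] at h
  obtain ⟨k, hk⟩ := h
  have hNne : (N : ℂ) ≠ 0 := Nat.cast_ne_zero.mpr (by omega)
  have hne : ((2 * (Real.pi : ℂ) * Complex.I)) ≠ 0 := by
    simp [Real.pi_ne_zero, Complex.I_ne_zero]
  have hc : (r : ℂ) = (k : ℂ) * N := by
    field_simp at hk
    have h2 : ((r : ℂ)) * (2 * (Real.pi:ℂ) * Complex.I) = ((k:ℂ) * N) * (2 * (Real.pi:ℂ) * Complex.I) := by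
      linear_combination (2 * (Real.pi:ℂ) * Complex.I) * hk
    exact mul_right_cancel₀ hne h2
  have hz : (r : ℤ) = k * N := by exact_mod_cast hc
  have hN0 : (0:ℤ) < N := by exact_mod_cast (by omega : 0 < N)
  rcases le_or_gt k 0 with hk0 | hk0
  · have : (r:ℤ) ≤ 0 := by
      rw [hz]; exact mul_nonpos_of_nonpos_of_nonneg hk0 hN0.le
    omega
  · have : (N:ℤ) ≤ r := by
      rw [hz]; nlinarith
    omega

lemma sum_exp_zero {N : ℕ} [NeZero N] {t : ZMod N} (j : ℕ) (hj : (j : ZMod N) * t ≠ 0) :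
    ∑ n : ZMod N, Complex.exp (2 * Real.pi * Complex.I * (j * (ZMod.val n * ZMod.val t)) / N) = 0 := by
  obtain ⟨m, rfl⟩ : ∃ m, N = m + 1 := ⟨N - 1, by have := NeZero.ne N; omega⟩
  let Nn := m + 1
  show ∑ n : ZMod Nn, Complex.exp (2 * Real.pi * Complex.I * (j * (ZMod.val n * ZMod.val t)) / Nn) = 0
  have hN0 : Nn ≠ 0 := by omega
  set x : ℂ := Complex.exp (2 * Real.pi * Complex.I / Nn) with hxdef
  have hxN : x ^ Nn = 1 := exp_base_pow hN0
  set M : ZMod Nn := (j : ZMod Nn) * t with hM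
  set y : ℂ := x ^ (ZMod.val M) with hy
  have hterm : ∀ n : ZMod Nn,
      Complex.exp (2 * Real.pi * Complex.I * (j * (ZMod.val n * ZMod.val t)) / Nn)
        = y ^ (ZMod.val n) := by
    intro n
    have h1 : Complex.exp (2 * Real.pi * Complex.I * (j * (ZMod.val n * ZMod.val t)) / Nn)
        = x ^ (j * (ZMod.val n * ZMod.val t)) := by
      rw [hxdef, ← Complex.exp_nat_mul]
      congr 1
      push_cast
      ring
    have h2 : y ^ (ZMod.val n) = x ^ (ZMod.val M * ZMod.val n) := by
      rw [hy, ← pow_mul]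
    have h3 : j * (ZMod.val n * ZMod.val t) ≡ ZMod.val M * ZMod.val n [MOD Nn] := by
      have := (ZMod.natCast_eq_natCast_iff (j * (ZMod.val n * ZMod.val t)) (ZMod.val M * ZMod.val n) Nn)
      apply this.mp
      push_cast
      simp only [ZMod.natCast_val, ZMod.cast_id]
      rw [hM]
      ring
    rw [h1, h2, pow_congr_mod x hxN h3]
  rw [Finset.sum_congr rfl (fun n _ => hterm n)]
  apply sum_pow_val
  · rw [hy, ← pow_mul, mul_comm, pow_mul, hxN, one_pow]
  · rw [hy, hxdef, ← Complex.exp_nat_mul]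
    have harg : (ZMod.val M : ℂ) * (2 * Real.pi * Complex.I / Nn)
        = 2 * Real.pi * Complex.I * (ZMod.val M) / Nn := by ring
    rw [harg]
    apply exp_ne_one
    · exact Nat.pos_of_ne_zero (fun h => hj ((ZMod.val_eq_zero M).mp h))
    · exact ZMod.val_lt M


lemma cos_sum_zero {N : ℕ} [NeZero N] {t : ZMod N} (j : ℕ) (hj : (j : ZMod N) * t ≠ 0) (ψ : ℝ) :
    ∑ n : ZMod N, Real.cos (2 * Real.pi * (j * (ZMod.val n * ZMod.val t)) / N - ψ) = 0 := by
  have hterm : ∀ n : ZMod N,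
      Real.cos (2 * Real.pi * (j * (ZMod.val n * ZMod.val t)) / N - ψ)
        = (Complex.exp (2 * Real.pi * Complex.I * (j * (ZMod.val n * ZMod.val t)) / N)
            * Complex.exp (-(ψ:ℂ) * Complex.I)).re := by
    intro n
    rw [← Complex.exp_add]
    have : (2 * Real.pi * Complex.I * (j * (ZMod.val n * ZMod.val t)) / N + -(ψ:ℂ) * Complex.I)
        = ((2 * Real.pi * (j * (ZMod.val n * ZMod.val t)) / N - ψ : ℝ) : ℂ) * Complex.I := by
      push_cast
      ring
    rw [this, Complex.exp_ofReal_mul_I_re]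
  rw [Finset.sum_congr rfl (fun n _ => hterm n), ← Complex.re_sum, ← Finset.sum_mul,
    sum_exp_zero j hj, zero_mul, Complex.zero_re]


lemma cos_pows {N : ℕ} [NeZero N] {t : ZMod N} (ht : t ≠ 0) (hN2 : ¬ (2 ∣ N)) (hN3 : ¬ (3 ∣ N))
    (ψ : ℝ) :
    (∑ n : ZMod N, Real.cos (2 * Real.pi * (ZMod.val n * ZMod.val t) / N - ψ) = 0)
    ∧ (∑ n : ZMod N, Real.cos (2 * Real.pi * (ZMod.val n * ZMod.val t) / N - ψ) ^ 2 = N / 2)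
    ∧ (∑ n : ZMod N, Real.cos (2 * Real.pi * (ZMod.val n * ZMod.val t) / N - ψ) ^ 3 = 0) := by
  have hu : ∀ j : ℕ, Nat.Coprime j N → (j : ZMod N) * t ≠ 0 := by
    intro j hj h
    have hunit : IsUnit (j : ZMod N) := (ZMod.isUnit_iff_coprime j N).mpr hj
    exact ht (by rwa [hunit.mul_right_eq_zero] at h)
  have h1 : ((1:ℕ) : ZMod N) * t ≠ 0 := by simpa using ht
  have h2 : ((2:ℕ) : ZMod N) * t ≠ 0 :=
    hu 2 ((Nat.Prime.coprime_iff_not_dvd Nat.prime_two).mpr hN2)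
  have h3 : ((3:ℕ) : ZMod N) * t ≠ 0 :=
    hu 3 ((Nat.Prime.coprime_iff_not_dvd Nat.prime_three).mpr hN3)
  have S1 : ∑ n : ZMod N, Real.cos (2 * Real.pi * (ZMod.val n * ZMod.val t) / N - ψ) = 0 := by
    have := cos_sum_zero 1 h1 ψ
    simpa using this
  have S2 : ∑ n : ZMod N, Real.cos (2 * (2 * Real.pi * (ZMod.val n * ZMod.val t) / N - ψ)) = 0 := by
    have := cos_sum_zero 2 h2 (2*ψ)
    rw [← this]
    apply Finset.sum_congr rfl
    intro n _
    congr 1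
    push_cast
    ring
  have S3 : ∑ n : ZMod N, Real.cos (3 * (2 * Real.pi * (ZMod.val n * ZMod.val t) / N - ψ)) = 0 := by
    have := cos_sum_zero 3 h3 (3*ψ)
    rw [← this]
    apply Finset.sum_congr rfl
    intro n _
    congr 1
    push_cast
    ring
  refine ⟨S1, ?_, ?_⟩
  · have : ∀ x : ℝ, Real.cos x ^ 2 = 1/2 + Real.cos (2*x) / 2 := fun x => Real.cos_sq x
    rw [Finset.sum_congr rfl (fun n _ => this _), Finset.sum_add_distrib]
    have e2 : ∑ x : ZMod N, Real.cos (2 * (2 * Real.pi * (ZMod.val x * ZMod.val t) / N - ψ)) / 2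
        = 0 := by
      rw [← Finset.sum_div, S2, zero_div]
    rw [e2]
    simp [ZMod.card, Finset.card_univ]
    ring
  · have : ∀ x : ℝ, Real.cos x ^ 3 = (Real.cos (3*x) + 3 * Real.cos x) / 4 := by
      intro x
      have := Real.cos_three_mul x
      linarith
    rw [Finset.sum_congr rfl (fun n _ => this _), ← Finset.sum_div, Finset.sum_add_distrib,
      S3, ← Finset.mul_sum, S1]
    simp


lemma aux_rot (ν : ℕ) (hν : 3 ≤ ν) (z : ℂ) :
    ∃ k : ℕ, k < ν ∧ Real.cos (Real.pi / ν) * ‖z‖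
      ≤ (z * Complex.exp (-(2 * Real.pi * k / ν : ℝ) * Complex.I)).re := by
  have hν0 : (0:ℝ) < ν := by positivity
  rcases eq_or_ne z 0 with rfl | hz
  · exact ⟨0, by omega, by simp⟩
  set θ := Complex.arg z with hθ
  set k' : ℤ := round (θ * ν / (2 * Real.pi)) with hk'
  have hpi := Real.pi_pos
  have hclose : |θ - 2 * Real.pi * k' / ν| ≤ Real.pi / ν := by
    have h1 : |θ * ν / (2 * Real.pi) - k'| ≤ 1/2 := by
      have := abs_sub_round (θ * ν / (2 * Real.pi))
      simpa using this
    have h2 : θ - 2 * Real.pi * k' / ν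
        = (θ * ν / (2 * Real.pi) - k') * (2 * Real.pi / ν) := by
      field_simp
    rw [h2, abs_mul, abs_of_pos (by positivity : (0:ℝ) < 2 * Real.pi / ν)]
    calc |θ * ν / (2 * Real.pi) - k'| * (2 * Real.pi / ν)
        ≤ (1/2) * (2 * Real.pi / ν) := by
          apply mul_le_mul_of_nonneg_right h1 (by positivity)
      _ = Real.pi / ν := by ring
  have hcos : Real.cos (Real.pi / ν) ≤ Real.cos (θ - 2 * Real.pi * k' / ν) := by
    rw [← Real.cos_abs (θ - 2 * Real.pi * k' / ν)]
    apply Real.cos_le_cos_of_nonneg_of_le_pi (abs_nonneg _) _ hclose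
    calc Real.pi / ν ≤ Real.pi / 1 := by
          apply div_le_div_of_nonneg_left hpi.le one_pos
          exact_mod_cast by omega
      _ = Real.pi := by ring
  -- re formula
  have hre : ∀ ψ : ℝ, (z * Complex.exp (-(ψ:ℝ) * Complex.I)).re
      = ‖z‖ * Real.cos (θ - ψ) := by
    intro ψ
    conv_lhs => rw [← Complex.norm_mul_exp_arg_mul_I z]
    rw [mul_assoc, ← Complex.exp_add]
    have : (Complex.arg z : ℂ) * Complex.I + -(ψ:ℝ) * Complex.I
        = ((θ - ψ : ℝ) : ℂ) * Complex.I := by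
      push_cast [hθ]
      ring
    rw [this]
    rw [Complex.re_ofReal_mul, Complex.exp_ofReal_mul_I_re]
  -- choose k = k' mod ν
  have hν0' : (0:ℤ) < (ν:ℤ) := by exact_mod_cast by omega
  have hk0' : 0 ≤ k' % (ν:ℤ) := Int.emod_nonneg k' (by omega)
  have hklt : k' % (ν:ℤ) < ν := Int.emod_lt_of_pos k' hν0'
  obtain ⟨k, hkk⟩ : ∃ k : ℕ, (k:ℤ) = k' % (ν:ℤ) :=
    ⟨(k' % (ν:ℤ)).toNat, Int.toNat_of_nonneg hk0'⟩
  have hk1 : k < ν := by omega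
  refine ⟨k, hk1, ?_⟩
  have hexp : Complex.exp (-(2 * Real.pi * k / ν : ℝ) * Complex.I)
      = Complex.exp (-(2 * Real.pi * k' / ν : ℝ) * Complex.I) := by
    obtain ⟨m, hm⟩ : ∃ m : ℤ, k' = k + ν * m := ⟨k' / ν, by
      have hdm := Int.mul_ediv_add_emod k' (ν:ℤ)
      linarith⟩
    rw [Complex.exp_eq_exp_iff_exists_int]
    refine ⟨m, ?_⟩
    have hmc : (k' : ℂ) = (k : ℂ) + (ν : ℂ) * m := by exact_mod_cast hm
    have hνc : (ν : ℂ) ≠ 0 := by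
      exact_mod_cast (by positivity : (0:ℝ) < (ν:ℝ)).ne'
    have hdiv : (k' : ℂ)/ν = k/ν + m := by
      rw [hmc]; field_simp
    push_cast
    linear_combination (2 * (Real.pi:ℂ) * Complex.I) * hdiv
  rw [hexp, hre (2 * Real.pi * k' / ν)]
  calc Real.cos (Real.pi / ν) * ‖z‖
      ≤ Real.cos (θ - 2 * Real.pi * k' / ν) * ‖z‖ :=
        mul_le_mul_of_nonneg_right hcos (norm_nonneg z)
    _ = ‖z‖ * Real.cos (θ - 2 * Real.pi * k' / ν) := mul_comm _ _


lemma bernoulli_exp_int {Ω' : Type*} [MeasurableSpace Ω'] (μ : Measure Ω')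
    [IsProbabilityMeasure μ] (X : Ω' → ℝ) (hX : Measurable X)
    (h01 : ∀ ω, X ω = 0 ∨ X ω = 1) (τ : ℝ) (hτ0 : 0 ≤ τ)
    (hτ : μ {ω | X ω = 1} = ENNReal.ofReal τ) (c : ℝ) :
    ∫ ω, Real.exp (c * X ω) ∂μ = 1 + τ * (Real.exp c - 1) := by
  have hs : MeasurableSet {ω | X ω = 1} := hX (measurableSet_singleton 1)
  have hiX : X = Set.indicator {ω | X ω = 1} (fun _ => (1:ℝ)) := by
    funext ω
    rcases h01 ω with h | h
    · rw [h, Set.indicator_of_notMem]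
      simp [Set.mem_setOf_eq, h]
    · rw [h, Set.indicator_of_mem]
      exact h
  have hintX : Integrable X μ := by
    rw [hiX]
    exact (integrable_const (1:ℝ)).indicator hs
  have hEX : ∫ ω, X ω ∂μ = τ := by
    conv_lhs => rw [hiX]
    rw [integral_indicator_const (1:ℝ) hs, measureReal_def, hτ, smul_eq_mul, mul_one,
      ENNReal.toReal_ofReal hτ0]
  have hfun : ∀ ω, Real.exp (c * X ω) = 1 + (Real.exp c - 1) * X ω := by
    intro ω
    rcases h01 ω with h | h <;> simp [h]
  rw [integral_congr_ae (Filter.Eventually.of_forall hfun)]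
  rw [integral_add (integrable_const 1) (hintX.const_mul _), integral_const,
    MeasureTheory.integral_const_mul, hEX]
  simp
  ring


lemma chernoff_bound {Ω' : Type*} [MeasurableSpace Ω'] (μ : Measure Ω')
    [IsProbabilityMeasure μ] {N : ℕ} [NeZero N]
    (X : ZMod N → Ω' → ℝ) (hX : ∀ n, Measurable (X n))
    (h01 : ∀ n ω', X n ω' = 0 ∨ X n ω' = 1)
    (τ : ℝ) (hτ0 : 0 ≤ τ) (hτ1 : τ ≤ 1)
    (h1 : ∀ n, μ {ω' | X n ω' = 1} = ENNReal.ofReal τ)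
    (hind : ProbabilityTheory.iIndepFun X μ)
    (c : ZMod N → ℝ) (lam : ℝ) (hlam : 0 ≤ lam) :
    (μ {ω' | 0 ≤ ∑ n : ZMod N, c n * X n ω'}).toReal
      ≤ Real.exp (τ * ∑ n : ZMod N, (Real.exp (lam * c n) - 1)) := by
  set Y : ZMod N → Ω' → ℝ := fun n ω => c n * X n ω with hY
  have hYmeas : ∀ n, Measurable (Y n) := fun n => (hX n).const_mul _
  have hindY : iIndepFun Y μ :=
    hind.comp (fun n x => c n * x) (fun n => measurable_const_mul _)
  have hSeq : {ω' | 0 ≤ ∑ n : ZMod N, c n * X n ω'}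
      = {ω' | (0:ℝ) ≤ (∑ n : ZMod N, Y n) ω'} := by
    ext ω'
    simp [hY, Finset.sum_apply]
  have hSmeas : Measurable (∑ n : ZMod N, Y n) := by
    have : (∑ n : ZMod N, Y n) = fun ω => ∑ n : ZMod N, Y n ω := by
      funext ω; simp [Finset.sum_apply]
    rw [this]
    exact Finset.measurable_sum univ (fun n _ => hYmeas n)
  have hbound : ∀ ω, ‖Real.exp (lam * (∑ n : ZMod N, Y n) ω)‖
      ≤ Real.exp (∑ n : ZMod N, |lam * c n|) := by
    intro ω
    rw [Real.norm_eq_abs, abs_of_pos (Real.exp_pos _), Real.exp_le_exp]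
    rw [Finset.sum_apply, Finset.mul_sum]
    apply Finset.sum_le_sum
    intro n _
    have h01' := h01 n ω
    have : |lam * (Y n ω)| ≤ |lam * c n| := by
      rw [hY]
      rcases h01' with h | h <;> simp [h, mul_assoc, abs_mul]
      positivity
    calc lam * Y n ω ≤ |lam * Y n ω| := le_abs_self _
      _ ≤ |lam * c n| := this
  have hint : Integrable (fun ω => Real.exp (lam * (∑ n : ZMod N, Y n) ω)) μ := by
    apply Integrable.mono' (integrable_const (Real.exp (∑ n : ZMod N, |lam * c n|)))
    · exact (hSmeas.const_mul lam).exp.aestronglyMeasurable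
    · exact Filter.Eventually.of_forall hbound
  have hch := measure_ge_le_exp_mul_mgf (μ := μ) (X := (∑ n : ZMod N, Y n)) 0 hlam hint
  rw [hSeq]
  refine le_trans (by simpa [measureReal_def] using hch) ?_
  rw [hindY.mgf_sum hYmeas]
  have hmgf : ∀ n, mgf (Y n) μ lam = 1 + τ * (Real.exp (lam * c n) - 1) := by
    intro n
    rw [mgf]
    have : ∀ ω, Real.exp (lam * Y n ω) = Real.exp ((lam * c n) * X n ω) := by
      intro ω; rw [hY]; ring_nf
    rw [integral_congr_ae (Filter.Eventually.of_forall this)]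
    exact bernoulli_exp_int μ (X n) (hX n) (h01 n) τ hτ0 (h1 n) _
  rw [Finset.prod_congr rfl (fun n _ => hmgf n)]
  rw [Finset.mul_sum, Real.exp_sum]
  apply Finset.prod_le_prod
  · intro n _
    have : (0:ℝ) < Real.exp (lam * c n) := Real.exp_pos _
    nlinarith
  · intro n _
    have := Real.add_one_le_exp (τ * (Real.exp (lam * c n) - 1))
    linarith


lemma poly_key {b : ℝ} (hb0 : 0 < b) (hb : b ≤ 1/2) :
    -((2*b/(1+2*b^2))*b) + (2*b/(1+2*b^2))^2/2*(1/2+b^2)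
      - (2*b/(1+2*b^2))^3/6*(3*b/2+b^3)
      + (5/96)*(2*b/(1+2*b^2))^4*(1+b)^2*(1/2+b^2)
    ≤ -(b^2/(1+4*b^2)) := by
  set lam := 2*b/(1+2*b^2) with hlam
  have hu : (0:ℝ) < 1+2*b^2 := by positivity
  have hv : (0:ℝ) < 1+4*b^2 := by positivity
  have hlam0 : 0 < lam := by positivity
  have hlam2b : lam ≤ 2*b := by
    rw [hlam, div_le_iff₀ hu]
    nlinarith
  have step1 : - lam^3/6*(3*b/2+b^3) + (5/96)*lam^4*(1+b)^2*(1/2+b^2) ≤ 0 := by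
    have h5 : (5/96)*lam*(1+b)^2*(1/2+b^2) ≤ (3*b/2+b^3)/6 := by
      have hPQ : (5/48)*((1+b)^2*(1/2+b^2)) ≤ 1/4 + b^2/6 := by 
        have hb2 : b^2 ≤ b/2 := by nlinarith
        have hb3 : b^3 ≤ b/4 := by nlinarith
        have hb4 : b^4 ≤ b/8 := by nlinarith
        nlinarith [hb2, hb3, hb4]
      have hbPQ := mul_le_mul_of_nonneg_left hPQ hb0.le
      calc (5/96)*lam*(1+b)^2*(1/2+b^2) ≤ (5/96)*(2*b)*(1+b)^2*(1/2+b^2) := by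
            apply mul_le_mul_of_nonneg_right _ (by positivity)
            apply mul_le_mul_of_nonneg_right _ (by positivity)
            nlinarith
        _ ≤ (3*b/2+b^3)/6 := by nlinarith [hbPQ]
    have hl3 : (0:ℝ) < lam^3 := by positivity
    nlinarith [mul_le_mul_of_nonneg_left h5 hl3.le]
  have step2 : -(lam*b) + lam^2/2*(1/2+b^2) = -(b^2/(1+2*b^2)) := by
    rw [hlam]
    field_simp
    ring
  have step3 : -(b^2/(1+2*b^2)) ≤ -(b^2/(1+4*b^2)) := by
    have : b^2/(1+4*b^2) ≤ b^2/(1+2*b^2) := by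
      gcongr
      nlinarith
    linarith
  calc -(lam*b) + lam^2/2*(1/2+b^2) - lam^3/6*(3*b/2+b^3)
        + (5/96)*lam^4*(1+b)^2*(1/2+b^2)
      ≤ -(lam*b) + lam^2/2*(1/2+b^2) := by nlinarith [step1]
    _ = -(b^2/(1+2*b^2)) := step2
    _ ≤ -(b^2/(1+4*b^2)) := step3

lemma exp_taylor4 {y : ℝ} (hy : |y| ≤ 1) :
    Real.exp y ≤ 1 + y + y^2/2 + y^3/6 + (5/96)*y^4 := by
  have h := Real.exp_bound hy (by norm_num : 0 < 4)
  have hsum : ∑ m ∈ Finset.range 4, y ^ m / (Nat.factorial m) = 1 + y + y^2/2 + y^3/6 := by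
    simp [Finset.sum_range_succ, Nat.factorial]
  rw [hsum] at h
  have h4 : |y|^4 = y^4 := by
    rw [← abs_pow, abs_of_nonneg (by positivity)]
  rw [h4] at h
  norm_num [Nat.factorial] at h
  have := abs_le.mp h
  linarith [this.2]


set_option maxHeartbeats 1000000 in
lemma sum_exp_est {N : ℕ} [NeZero N] (co : ZMod N → ℝ) (hco : ∀ n, |co n| ≤ 1)
    (S1 : ∑ n : ZMod N, co n = 0) (S2 : ∑ n : ZMod N, (co n)^2 = (N:ℝ)/2)
    (S3 : ∑ n : ZMod N, (co n)^3 = 0)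
    {b : ℝ} (hb0 : 0 < b) (hb : b ≤ 1/2) :
    ∑ n : ZMod N, (Real.exp ((2*b/(1+2*b^2)) * (co n - b)) - 1)
      ≤ -(N:ℝ) * (b^2/(1+4*b^2)) := by
  set lam := 2*b/(1+2*b^2) with hlam
  have hu : (0:ℝ) < 1+2*b^2 := by positivity
  have hlam0 : 0 < lam := by positivity
  have hlam1b : lam * (1+b) ≤ 1 := by
    rw [hlam, div_mul_eq_mul_div, div_le_one hu]
    nlinarith
  have hcard : ((Finset.univ : Finset (ZMod N)).card : ℝ) = N := by
    simp [Finset.card_univ, ZMod.card]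
  have e1 : ∑ n : ZMod N, (co n - b) = -((N:ℝ)*b) := by
    rw [Finset.sum_sub_distrib, S1, Finset.sum_const, nsmul_eq_mul, hcard]
    ring
  have e2 : ∑ n : ZMod N, (co n - b)^2 = (N:ℝ)*(1/2+b^2) := by
    have h : ∀ n : ZMod N, (co n - b)^2 = (co n)^2 - (2*b)*(co n) + b^2 := by
      intro n; ring
    rw [Finset.sum_congr rfl (fun n _ => h n), Finset.sum_add_distrib,
      Finset.sum_sub_distrib, S2, ← Finset.mul_sum, S1, Finset.sum_const,
      nsmul_eq_mul, hcard]
    ring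
  have e3 : ∑ n : ZMod N, (co n - b)^3 = -((N:ℝ)*(3*b/2+b^3)) := by
    have h : ∀ n : ZMod N, (co n - b)^3
        = (co n)^3 - (3*b)*(co n)^2 + (3*b^2)*(co n) - b^3 := by
      intro n; ring
    rw [Finset.sum_congr rfl (fun n _ => h n), Finset.sum_sub_distrib,
      Finset.sum_add_distrib, Finset.sum_sub_distrib, S3, ← Finset.mul_sum, S2,
      ← Finset.mul_sum, S1, Finset.sum_const, nsmul_eq_mul, hcard]
    ring
  have hterm : ∀ n : ZMod N, Real.exp (lam * (co n - b)) - 1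
      ≤ lam*(co n - b) + (lam^2/2 + (5/96)*lam^4*(1+b)^2)*(co n - b)^2
        + (lam^3/6)*(co n - b)^3 := by
    intro n
    have hc1 : |co n - b| ≤ 1 + b := by
      calc |co n - b| ≤ |co n| + |b| := abs_sub _ _
        _ ≤ 1 + b := by
          have := hco n
          rw [abs_of_pos hb0]
          linarith
    have hsq : (co n - b)^2 ≤ (1+b)^2 := by
      have h' := abs_le.mp hc1
      nlinarith [h'.1, h'.2]
    have hc4 : (co n - b)^4 ≤ (1+b)^2*(co n - b)^2 := by
      nlinarith [sq_nonneg (co n - b), hsq]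
    have hy : |lam * (co n - b)| ≤ 1 := by
      rw [abs_mul, abs_of_pos hlam0]
      calc lam * |co n - b| ≤ lam * (1+b) :=
        mul_le_mul_of_nonneg_left hc1 hlam0.le
        _ ≤ 1 := hlam1b
    have h := exp_taylor4 hy
    have h4 : (5/96)*lam^4*(co n - b)^4 ≤ (5/96)*lam^4*((1+b)^2*(co n - b)^2) := by
      apply mul_le_mul_of_nonneg_left hc4 (by positivity)
    nlinarith [h, h4]
  calc ∑ n : ZMod N, (Real.exp (lam * (co n - b)) - 1)
      ≤ ∑ n : ZMod N, (lam*(co n - b) + (lam^2/2 + (5/96)*lam^4*(1+b)^2)*(co n - b)^2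
          + (lam^3/6)*(co n - b)^3) := Finset.sum_le_sum (fun n _ => hterm n)
    _ = lam * (∑ n : ZMod N, (co n - b))
        + (lam^2/2 + (5/96)*lam^4*(1+b)^2) * (∑ n : ZMod N, (co n - b)^2)
        + (lam^3/6) * (∑ n : ZMod N, (co n - b)^3) := by
      rw [Finset.sum_add_distrib, Finset.sum_add_distrib, ← Finset.mul_sum,
        ← Finset.mul_sum, ← Finset.mul_sum]
    _ ≤ -(N:ℝ) * (b^2/(1+4*b^2)) := by
      rw [e1, e2, e3]
      have hN0 : (0:ℝ) ≤ N := Nat.cast_nonneg N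
      have hk := mul_le_mul_of_nonneg_left (poly_key hb0 hb) hN0
      rw [← hlam] at hk
      nlinarith [hk]


set_option maxHeartbeats 1000000 in
/-- Variant V2: with `Ω` given by i.i.d. Bernoulli(τ) selectors,
`K(t) = ∑ₙ Xₙ e^{2πint/N}`, `τN = 4C(s²+1)log N` with `C > 1`, `a = cos(π/ν)`
for `ν ≥ 3`, and `N ≥ 2` not divisible by 2 or 3, the probability that
`|K(t)| ≥ K(0)/(2s)` for some `t ≠ 0` is at most `ν N^{1−Ca²}`. -/
theorem stmt14 {Ω' : Type*} [MeasurableSpace Ω'] (μ : Measure Ω') [IsProbabilityMeasure μ]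
    (N : ℕ) (hN : 2 ≤ N) [NeZero N] (hN2 : ¬ (2 ∣ N)) (hN3 : ¬ (3 ∣ N))
    (τ : ℝ) (hτ0 : 0 ≤ τ) (hτ1 : τ ≤ 1)
    (X : ZMod N → Ω' → ℝ) (hX : ∀ n, Measurable (X n))
    (h01 : ∀ n ω', X n ω' = 0 ∨ X n ω' = 1)
    (h1 : ∀ n, μ {ω' | X n ω' = 1} = ENNReal.ofReal τ)
    (hind : ProbabilityTheory.iIndepFun X μ)
    (s : ℕ) (hs : 1 ≤ s) (ν : ℕ) (hν : 3 ≤ ν) (a : ℝ) (ha : a = Real.cos (Real.pi / ν))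
    (C : ℝ) (hC : 1 < C) (hτN : τ * N = 4 * C * ((s : ℝ) ^ 2 + 1) * Real.log N) :
    μ {ω' | ∃ t : ZMod N, t ≠ 0 ∧
          (∑ n : ZMod N, X n ω') / (2 * s)
            ≤ ‖∑ n : ZMod N, (X n ω' : ℂ) *
                Complex.exp (2 * Real.pi * Complex.I * (n.val * t.val) / N)‖}
      ≤ ENNReal.ofReal ((ν : ℝ) * (N : ℝ) ^ ((1 : ℝ) - C * a ^ 2)) := by
  have hπ := Real.pi_pos
  have hs1 : (1:ℝ) ≤ (s:ℝ) := by exact_mod_cast hs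
  have hν1 : (1:ℝ) ≤ (ν:ℝ) := by exact_mod_cast (by omega : 1 ≤ ν)
  -- basic facts about a
  have ha1 : a ≤ 1 := ha ▸ Real.cos_le_one _
  have hπν : Real.pi / ν ≤ Real.pi / 3 := by
    apply div_le_div_of_nonneg_left hπ.le (by norm_num)
    exact_mod_cast hν
  have hπν0 : 0 < Real.pi / ν := by positivity
  have ha0 : 0 < a := by
    rw [ha]
    apply Real.cos_pos_of_mem_Ioo
    rw [Set.mem_Ioo]
    constructor
    · linarith
    · linarith
  set b := a / (2*(s:ℝ)) with hbdef
  have hb0 : 0 < b := by rw [hbdef]; positivity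
  have hb : b ≤ 1/2 := by
    rw [hbdef, div_le_iff₀ (by positivity)]
    nlinarith
  set lam := 2*b/(1+2*b^2) with hlamdef
  have hlam0 : (0:ℝ) ≤ lam := by positivity
  -- the elementary events
  set A : ZMod N → ℕ → Set Ω' := fun t k =>
    {ω' | 0 ≤ ∑ n : ZMod N,
      (Real.cos (2*Real.pi*((n.val:ℝ)*(t.val:ℝ))/N - 2*Real.pi*k/ν) - b) * X n ω'} with hA
  -- inclusion
  have hsub : {ω' | ∃ t : ZMod N, t ≠ 0 ∧
          (∑ n : ZMod N, X n ω') / (2 * s)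
            ≤ ‖∑ n : ZMod N, (X n ω' : ℂ) *
                Complex.exp (2 * Real.pi * Complex.I * (n.val * t.val) / N)‖}
      ⊆ ⋃ t ∈ (Finset.univ.erase (0 : ZMod N)), ⋃ k ∈ Finset.range ν, A t k := by
    intro ω' hω'
    obtain ⟨t, ht, hineq⟩ := hω'
    set z : ℂ := ∑ n : ZMod N, (X n ω' : ℂ) *
      Complex.exp (2 * Real.pi * Complex.I * (n.val * t.val) / N) with hz
    obtain ⟨k, hk, hrot⟩ := aux_rot ν hν z
    have hre : (z * Complex.exp (-(2*Real.pi*k/ν : ℝ) * Complex.I)).re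
        = ∑ n : ZMod N,
            Real.cos (2*Real.pi*((n.val:ℝ)*(t.val:ℝ))/N - 2*Real.pi*k/ν) * X n ω' := by
      rw [hz, Finset.sum_mul, Complex.re_sum]
      apply Finset.sum_congr rfl
      intro n _
      rw [mul_assoc, ← Complex.exp_add]
      have harg : 2 * (Real.pi:ℂ) * Complex.I * ((n.val:ℂ) * (t.val:ℂ)) / N
            + -(2*Real.pi*k/ν : ℝ) * Complex.I
          = ((2*Real.pi*((n.val:ℝ)*(t.val:ℝ))/N - 2*Real.pi*k/ν : ℝ) : ℂ) * Complex.I := by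
        push_cast
        ring
      rw [harg, Complex.re_ofReal_mul, Complex.exp_ofReal_mul_I_re]
      ring
    have hXsum : b * (∑ n : ZMod N, X n ω')
        ≤ ∑ n : ZMod N,
            Real.cos (2*Real.pi*((n.val:ℝ)*(t.val:ℝ))/N - 2*Real.pi*k/ν) * X n ω' := by
      rw [← hre]
      calc b * (∑ n : ZMod N, X n ω')
          = a * ((∑ n : ZMod N, X n ω') / (2 * s)) := by
            rw [hbdef]; ring
        _ ≤ a * ‖z‖ := mul_le_mul_of_nonneg_left hineq ha0.le
        _ = Real.cos (Real.pi / ν) * ‖z‖ := by rw [ha]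
        _ ≤ (z * Complex.exp (-(2*Real.pi*k/ν : ℝ) * Complex.I)).re := hrot
    apply Set.mem_biUnion (Finset.mem_coe.mpr (Finset.mem_erase.mpr ⟨ht, Finset.mem_univ t⟩))
    apply Set.mem_biUnion (Finset.mem_coe.mpr (Finset.mem_range.mpr hk))
    rw [hA]
    simp only [Set.mem_setOf_eq]
    have : ∑ n : ZMod N,
        (Real.cos (2*Real.pi*((n.val:ℝ)*(t.val:ℝ))/N - 2*Real.pi*k/ν) - b) * X n ω'
        = (∑ n : ZMod N,
            Real.cos (2*Real.pi*((n.val:ℝ)*(t.val:ℝ))/N - 2*Real.pi*k/ν) * X n ω')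
          - b * (∑ n : ZMod N, X n ω') := by
      rw [Finset.mul_sum, ← Finset.sum_sub_distrib]
      apply Finset.sum_congr rfl
      intro n _
      ring
    rw [this]
    linarith
  -- per-event bound
  have hNR : (0:ℝ) < N := by positivity
  have hlogN : 0 < Real.log N := Real.log_pos (by exact_mod_cast hN)
  set P : ℝ := Real.exp (-(C * a^2 * Real.log N)) with hP
  have hper : ∀ t : ZMod N, t ≠ 0 → ∀ k : ℕ, μ (A t k) ≤ ENNReal.ofReal P := by
    intro t ht k
    set co : ZMod N → ℝ := fun n =>
      Real.cos (2*Real.pi*((n.val:ℝ)*(t.val:ℝ))/N - 2*Real.pi*k/ν) with hco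
    have hch := chernoff_bound μ X hX h01 τ hτ0 hτ1 h1 hind
      (fun n => co n - b) lam hlam0
    obtain ⟨S1, S2, S3⟩ := cos_pows ht hN2 hN3 (2*Real.pi*k/ν)
    have hest : ∑ n : ZMod N, (Real.exp (lam * (co n - b)) - 1)
        ≤ -(N:ℝ) * (b^2/(1+4*b^2)) := by
      rw [hlamdef]
      exact sum_exp_est co (fun n => Real.abs_cos_le_one _) S1 S2 S3 hb0 hb
    have hbb : (N:ℝ) * (b^2/(1+4*b^2)) = (N:ℝ) * (a^2 / (4*((s:ℝ)^2 + a^2))) := by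
      rw [hbdef]
      have hsne : (s:ℝ) ≠ 0 := by linarith
      have h2 : ((s:ℝ)^2 + a^2) ≠ 0 := by positivity
      field_simp
      ring
    have hexp1 : τ * ∑ n : ZMod N, (Real.exp (lam * (co n - b)) - 1)
        ≤ -(C * a^2 * Real.log N) := by
      have h1' : τ * ∑ n : ZMod N, (Real.exp (lam * (co n - b)) - 1)
          ≤ τ * (-(N:ℝ) * (b^2/(1+4*b^2))) := mul_le_mul_of_nonneg_left hest hτ0
      have h2' : τ * (-(N:ℝ) * (b^2/(1+4*b^2))) = -(τ * N * (a^2 / (4*((s:ℝ)^2 + a^2)))) := by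
        rw [show τ * (-(N:ℝ) * (b^2/(1+4*b^2))) = -(τ * ((N:ℝ) * (b^2/(1+4*b^2)))) by ring, hbb]
        ring
      have h3' : a^2 / (4*((s:ℝ)^2 + 1)) ≤ a^2 / (4*((s:ℝ)^2 + a^2)) :=
        div_le_div_of_nonneg_left (by positivity) (by positivity) (by nlinarith)
      have h4' : τ * N * (a^2 / (4*((s:ℝ)^2 + 1))) ≤ τ * N * (a^2 / (4*((s:ℝ)^2 + a^2))) := by
        apply mul_le_mul_of_nonneg_left h3'
        have : (0:ℝ) ≤ τ * N := by positivity
        exact this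
      have h5' : τ * N * (a^2 / (4*((s:ℝ)^2 + 1))) = C * a^2 * Real.log N := by
        rw [hτN]
        have : ((s:ℝ)^2 + 1) ≠ 0 := by positivity
        field_simp
      linarith
    have htr := le_trans hch (Real.exp_le_exp.mpr hexp1)
    calc μ (A t k) = ENNReal.ofReal ((μ (A t k)).toReal) := by
          rw [ENNReal.ofReal_toReal (measure_ne_top μ _)]
      _ ≤ ENNReal.ofReal P := ENNReal.ofReal_le_ofReal htr
  -- union bound
  calc μ {ω' | ∃ t : ZMod N, t ≠ 0 ∧
          (∑ n : ZMod N, X n ω') / (2 * s)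
            ≤ ‖∑ n : ZMod N, (X n ω' : ℂ) *
                Complex.exp (2 * Real.pi * Complex.I * (n.val * t.val) / N)‖}
      ≤ μ (⋃ t ∈ (Finset.univ.erase (0 : ZMod N)), ⋃ k ∈ Finset.range ν, A t k) :=
        measure_mono hsub
    _ ≤ ∑ t ∈ Finset.univ.erase (0 : ZMod N), μ (⋃ k ∈ Finset.range ν, A t k) :=
        measure_biUnion_finset_le _ _
    _ ≤ ∑ t ∈ Finset.univ.erase (0 : ZMod N), ∑ k ∈ Finset.range ν, μ (A t k) := by
        apply Finset.sum_le_sum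
        intro t _
        exact measure_biUnion_finset_le _ _
    _ ≤ ∑ t ∈ Finset.univ.erase (0 : ZMod N), ∑ k ∈ Finset.range ν, ENNReal.ofReal P := by
        apply Finset.sum_le_sum
        intro t htmem
        apply Finset.sum_le_sum
        intro k _
        exact hper t (Finset.mem_erase.mp htmem).1 k
    _ = ((N - 1 : ℕ) : ℝ≥0∞) * ((ν : ℝ≥0∞) * ENNReal.ofReal P) := by
        rw [Finset.sum_const, Finset.sum_const, Finset.card_range,
          Finset.card_erase_of_mem (Finset.mem_univ _), Finset.card_univ, ZMod.card]
        simp [nsmul_eq_mul]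
    _ ≤ ENNReal.ofReal ((ν : ℝ) * (N : ℝ) ^ ((1 : ℝ) - C * a ^ 2)) := by
        rw [show ((N - 1 : ℕ) : ℝ≥0∞) = ENNReal.ofReal ((N - 1 : ℕ) : ℝ) by
            rw [ENNReal.ofReal_natCast],
          show ((ν : ℕ) : ℝ≥0∞) = ENNReal.ofReal ((ν : ℕ) : ℝ) by
            rw [ENNReal.ofReal_natCast],
          ← ENNReal.ofReal_mul (by positivity), ← ENNReal.ofReal_mul (by positivity)]
        apply ENNReal.ofReal_le_ofReal
        have hPN : P = (N:ℝ) ^ (-(C * a^2)) := by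
          rw [hP, Real.rpow_def_of_pos hNR]
          ring_nf
        have hsplit : (N:ℝ) ^ ((1:ℝ) - C * a^2) = (N:ℝ) * (N:ℝ) ^ (-(C * a^2)) := by
          rw [show (1:ℝ) - C * a^2 = 1 + (-(C * a^2)) by ring,
            Real.rpow_add hNR, Real.rpow_one]
        rw [hPN, hsplit]
        have hN1 : ((N - 1 : ℕ) : ℝ) ≤ (N : ℝ) := by
          have : (N - 1 : ℕ) ≤ N := by omega
          exact_mod_cast this
        have hpow : (0:ℝ) ≤ (N:ℝ) ^ (-(C * a^2)) := Real.rpow_nonneg hNR.le _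
        calc ((N - 1 : ℕ) : ℝ) * ((ν:ℝ) * (N:ℝ) ^ (-(C * a^2)))
            ≤ (N:ℝ) * ((ν:ℝ) * (N:ℝ) ^ (-(C * a^2))) := by
              apply mul_le_mul_of_nonneg_right hN1 (by positivity)
          _ = (ν:ℝ) * ((N:ℝ) * (N:ℝ) ^ (-(C * a^2))) := by ring
end

section
/- Let S ⊆ ℤ/Nℤ with |S| = s, t ∈ ℤ/Nℤ, and for each t' ∈ S∖{t} let ψ(t') ∈ ℝ and φ ∈ ℝ. Set Dₙ = ∑_{t' ∈ S∖{t}} cos(2πn(t−t')/N + ψ(t') − φ) and let M = (1/N)∑_{n ∈ ℤ/Nℤ}. Then M(Dₙ) = 0 and M(Dₙᵏ) ≤ (s−1)^{k−1} for all k ≥ 2. -/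
open Finset

section Aux

set_option linter.unusedSectionVars false

variable {N : ℕ} [NeZero N]

private lemma charSum_s17 (a : ZMod N) :
    ∑ n : ZMod N, ZMod.stdAddChar (a * n) = if a = 0 then (N : ℂ) else 0 := by
  split_ifs with h
  · simp [h, ZMod.card]
  · exact AddChar.sum_eq_zero_of_ne_one (ZMod.isPrimitive_stdAddChar N h)

private lemma key_exp (n x : ZMod N) (c : ℝ) :
    Complex.exp ((2 * Real.pi * n.val * x.val / N + c : ℝ) * Complex.I)
      = ZMod.stdAddChar (x * n) * Complex.exp ((c : ℝ) * Complex.I) := by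
  have h1 : (x * n : ZMod N) = (((x.val * n.val : ℕ) : ℤ) : ZMod N) := by
    push_cast [ZMod.natCast_zmod_val]
    ring
  rw [h1, ZMod.stdAddChar_coe, ← Complex.exp_add]
  congr 1
  push_cast
  ring

private lemma key_exp_neg (n x : ZMod N) (c : ℝ) :
    Complex.exp ((-(2 * Real.pi * n.val * x.val / N + c) : ℝ) * Complex.I)
      = ZMod.stdAddChar (-x * n) * Complex.exp ((-c : ℝ) * Complex.I) := by
  have h := key_exp n x c
  have h2 : (-x * n : ZMod N) = -(x * n) := by ring
  rw [h2, AddChar.map_neg_eq_inv]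
  rw [Complex.ofReal_neg (2 * Real.pi * n.val * x.val / N + c), neg_mul, Complex.exp_neg, h,
    Complex.ofReal_neg c, neg_mul, Complex.exp_neg, mul_inv]

private lemma cos_complex (θ : ℝ) :
    ((Real.cos θ : ℝ) : ℂ)
      = Complex.exp ((θ : ℝ) * Complex.I) / 2 + Complex.exp ((-θ : ℝ) * Complex.I) / 2 := by
  rw [Complex.ofReal_cos]
  simp only [Complex.cos, Complex.ofReal_neg, neg_mul]
  ring

private lemma char_map_sum {ι : Type*} (χ : AddChar (ZMod N) ℂ) (s : Finset ι)
    (f : ι → ZMod N) : χ (∑ i ∈ s, f i) = ∏ i ∈ s, χ (f i) := by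
  classical
  induction s using Finset.induction with
  | empty => simp
  | insert _ _ h ih => rw [Finset.sum_insert h, Finset.prod_insert h, AddChar.map_add_eq_mul, ih]

private def dd (t : ZMod N) (q : ZMod N × Bool) : ZMod N :=
  if q.2 then t - q.1 else q.1 - t

private lemma d_inj (t : ZMod N) (q q' : ZMod N × Bool) (h2 : q.2 = q'.2)
    (h1 : dd t q = dd t q') : q = q' := by
  obtain ⟨a, b⟩ := q
  obtain ⟨a', b'⟩ := q'
  simp only at h2
  subst h2
  cases b <;> simp_all [dd]

private lemma count_bound (A : Finset (ZMod N)) (t : ZMod N) (m : ℕ) :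
    (((Fintype.piFinset fun _ : Fin (m + 1) => A ×ˢ (Finset.univ : Finset Bool))).filter
      (fun p => ∑ i, dd t (p i) = 0)).card
      ≤ A.card ^ m * 2 ^ (m + 1) := by
  classical
  set B := (Fintype.piFinset fun _ : Fin m => A) ×ˢ
      (Finset.univ : Finset (Fin (m + 1) → Bool)) with hB
  have hcard : B.card = A.card ^ m * 2 ^ (m + 1) := by
    rw [Finset.card_product, Fintype.card_piFinset_const]
    congr 1
    simp [Fintype.card_fun]
  rw [← hcard]
  apply Finset.card_le_card_of_injOn
    (fun p => ((fun j : Fin m => (p j.castSucc).1), fun i => (p i).2))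
  · intro p hp
    rw [Finset.mem_coe, Finset.mem_filter] at hp
    rw [hB, Finset.mem_coe, Finset.mem_product]
    constructor
    · rw [Fintype.mem_piFinset]
      intro j
      have := Fintype.mem_piFinset.1 hp.1 j.castSucc
      exact (Finset.mem_product.1 this).1
    · exact Finset.mem_univ _
  · intro p hp p' hp' heq
    rw [Finset.mem_coe, Finset.mem_filter] at hp hp'
    simp only [Prod.mk.injEq] at heq
    obtain ⟨h1, h2⟩ := heq
    have hcast : ∀ j : Fin m, p j.castSucc = p' j.castSucc := by
      intro j
      exact Prod.ext (congrFun h1 j) (congrFun h2 j.castSucc)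
    funext i
    by_cases hi : i = Fin.last m
    · subst hi
      have hb : (p (Fin.last m)).2 = (p' (Fin.last m)).2 := congrFun h2 _
      have e1 := hp.2
      have e2 := hp'.2
      rw [Fin.sum_univ_castSucc] at e1 e2
      have hss : (∑ j : Fin m, dd t (p j.castSucc)) = ∑ j : Fin m, dd t (p' j.castSucc) :=
        Finset.sum_congr rfl fun j _ => by rw [hcast j]
      rw [hss] at e1
      have h3 := e1.trans e2.symm
      exact d_inj t _ _ hb (add_left_cancel h3)
    · have := hcast ((i.castPred hi))
      rwa [Fin.castSucc_castPred] at this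

end Aux

/-- Combinatorial moment bound of variant V3: with
`Dₙ = ∑_{t' ∈ S∖{t}} cos(2πn(t−t')/N + ψ(t') − φ)` and `M` the average over
`n ∈ ℤ/Nℤ`, one has `M(Dₙ) = 0` and `M(Dₙᵏ) ≤ (s−1)^{k−1}` for `k ≥ 2`. -/
theorem stmt17 (N : ℕ) [NeZero N] (S : Finset (ZMod N)) (s : ℕ) (hS : S.card = s)
    (t : ZMod N) (ht : t ∈ S) (ψ : ZMod N → ℝ) (φ : ℝ) :
    let D : ZMod N → ℝ := fun n =>
      ∑ t' ∈ S.erase t, Real.cos (2 * Real.pi * n.val * (t - t').val / N + ψ t' - φ)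
    ((1 : ℝ) / N) * ∑ n : ZMod N, D n = 0 ∧
    ∀ k : ℕ, 2 ≤ k →
      ((1 : ℝ) / N) * ∑ n : ZMod N, (D n) ^ k ≤ ((s : ℝ) - 1) ^ (k - 1) := by
  classical
  intro D
  set A := S.erase t with hA
  have hDval : ∀ n : ZMod N, D n
      = ∑ a ∈ A, Real.cos (2 * Real.pi * n.val * (t - a).val / N + ψ a - φ) := fun n => rfl
  have hne : ∀ a ∈ A, t - a ≠ 0 := by
    intro a ha
    have : a ≠ t := (Finset.mem_erase.1 (hA ▸ ha)).1
    exact sub_ne_zero.mpr (Ne.symm this)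
  have hcos : ∀ (n : ZMod N) (a : ZMod N),
      ((Real.cos (2 * Real.pi * n.val * (t - a).val / N + ψ a - φ) : ℝ) : ℂ)
        = (1/2 : ℂ) * (ZMod.stdAddChar ((t - a) * n)
            * Complex.exp ((ψ a - φ : ℝ) * Complex.I))
          + (1/2 : ℂ) * (ZMod.stdAddChar ((a - t) * n)
            * Complex.exp ((-(ψ a - φ) : ℝ) * Complex.I)) := by
    intro n a
    have hθ : 2 * Real.pi * n.val * (t - a).val / N + ψ a - φ
        = 2 * Real.pi * n.val * (t - a).val / N + (ψ a - φ) := by ring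
    rw [hθ, cos_complex, key_exp n (t - a) (ψ a - φ),
      key_exp_neg n (t - a) (ψ a - φ), neg_sub]
    ring
  constructor
  · -- first moment vanishes
    have hC : ∑ n : ZMod N, ((D n : ℝ) : ℂ) = 0 := by
      have hDC : ∀ n : ZMod N, ((D n : ℝ) : ℂ)
          = ∑ a ∈ A, ((1/2 : ℂ) * (ZMod.stdAddChar ((t - a) * n)
              * Complex.exp ((ψ a - φ : ℝ) * Complex.I))
            + (1/2 : ℂ) * (ZMod.stdAddChar ((a - t) * n)
              * Complex.exp ((-(ψ a - φ) : ℝ) * Complex.I))) := by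
        intro n
        rw [hDval n, Complex.ofReal_sum]
        exact Finset.sum_congr rfl fun a _ => hcos n a
      calc ∑ n : ZMod N, ((D n : ℝ) : ℂ)
          = ∑ a ∈ A, ((1/2 : ℂ) * ((∑ n : ZMod N, ZMod.stdAddChar ((t - a) * n))
              * Complex.exp ((ψ a - φ : ℝ) * Complex.I))
            + (1/2 : ℂ) * ((∑ n : ZMod N, ZMod.stdAddChar ((a - t) * n))
              * Complex.exp ((-(ψ a - φ) : ℝ) * Complex.I))) := by
            simp_rw [hDC]
            rw [Finset.sum_comm]
            refine Finset.sum_congr rfl fun a _ => ?_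
            rw [Finset.sum_add_distrib, ← Finset.mul_sum, ← Finset.mul_sum,
              ← Finset.sum_mul, ← Finset.sum_mul]
        _ = 0 := by
            refine Finset.sum_eq_zero fun a ha => ?_
            rw [charSum_s17, charSum_s17, if_neg (hne a ha), if_neg]
            · ring
            · intro h
              exact hne a ha (by rw [← neg_sub a t, h, neg_zero])
    have h0 : ∑ n : ZMod N, D n = 0 := by
      rw [← Complex.ofReal_sum] at hC
      exact_mod_cast hC
    rw [h0, mul_zero]
  · -- higher moments
    intro k hk
    obtain ⟨m, rfl⟩ : ∃ m, k = m + 1 := ⟨k - 1, by omega⟩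
    have hs1 : 1 ≤ s := hS ▸ Finset.card_pos.mpr ⟨t, ht⟩
    have hAcard : A.card = s - 1 := by rw [hA, Finset.card_erase_of_mem ht, hS]
    set Q : Finset (ZMod N × Bool) := A ×ˢ (Finset.univ : Finset Bool) with hQ
    set ca : ZMod N × Bool → ℝ := fun q => if q.2 then ψ q.1 - φ else -(ψ q.1 - φ) with hca
    set w : ZMod N × Bool → ℂ := fun q => Complex.exp ((ca q : ℝ) * Complex.I) with hw
    have hDn : ∀ n : ZMod N, ((D n : ℝ) : ℂ)
        = ∑ q ∈ Q, (1/2 : ℂ) * (ZMod.stdAddChar (dd t q * n) * w q) := by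
      intro n
      rw [hDval n, Complex.ofReal_sum, hQ, Finset.sum_product]
      refine Finset.sum_congr rfl fun a _ => ?_
      rw [hcos n a, Fintype.sum_bool]
      simp only [hw, hca, dd]
      norm_num
      try ring
    set P0 : Finset (Fin (m + 1) → ZMod N × Bool) :=
      (Fintype.piFinset fun _ : Fin (m + 1) => Q).filter
        (fun p => ∑ i, dd t (p i) = 0) with hP0
    have hsum : ∑ n : ZMod N, ((D n : ℝ) : ℂ) ^ (m + 1)
        = (N : ℂ) * ∑ p ∈ P0, ((1/2 : ℂ) ^ (m + 1) * ∏ i, w (p i)) := by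
      have hexp : ∀ n : ZMod N, ((D n : ℝ) : ℂ) ^ (m + 1)
          = ∑ p ∈ Fintype.piFinset (fun _ : Fin (m + 1) => Q),
              ((1/2 : ℂ) ^ (m + 1)
                * (ZMod.stdAddChar ((∑ i, dd t (p i)) * n) * ∏ i, w (p i))) := by
        intro n
        rw [hDn n]
        rw [show (∑ q ∈ Q, (1/2 : ℂ) * (ZMod.stdAddChar (dd t q * n) * w q)) ^ (m + 1)
            = ∏ _i : Fin (m + 1), ∑ q ∈ Q, (1/2 : ℂ) * (ZMod.stdAddChar (dd t q * n) * w q) by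
          rw [Finset.prod_const, Finset.card_univ, Fintype.card_fin]]
        rw [Finset.prod_univ_sum]
        refine Finset.sum_congr rfl fun p _ => ?_
        rw [Finset.prod_mul_distrib, Finset.prod_mul_distrib, Finset.prod_const,
          Finset.card_univ, Fintype.card_fin]
        rw [Finset.sum_mul, char_map_sum]
        try ring
      simp_rw [hexp]
      rw [Finset.sum_comm]
      calc ∑ p ∈ Fintype.piFinset (fun _ : Fin (m + 1) => Q), ∑ n : ZMod N,
            ((1/2 : ℂ) ^ (m + 1)
              * (ZMod.stdAddChar ((∑ i, dd t (p i)) * n) * ∏ i, w (p i)))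
          = ∑ p ∈ Fintype.piFinset (fun _ : Fin (m + 1) => Q),
              (if ∑ i, dd t (p i) = 0 then
                (N : ℂ) * ((1/2 : ℂ) ^ (m + 1) * ∏ i, w (p i)) else 0) := by
            refine Finset.sum_congr rfl fun p _ => ?_
            have : ∑ n : ZMod N, ((1/2 : ℂ) ^ (m + 1)
                  * (ZMod.stdAddChar ((∑ i, dd t (p i)) * n) * ∏ i, w (p i)))
                = (1/2 : ℂ) ^ (m + 1)
                  * ((∑ n : ZMod N, ZMod.stdAddChar ((∑ i, dd t (p i)) * n)) * ∏ i, w (p i)) := by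
              rw [← Finset.mul_sum, ← Finset.sum_mul]
            rw [this, charSum_s17]
            split_ifs
            · ring
            · simp
        _ = ∑ p ∈ P0, (N : ℂ) * ((1/2 : ℂ) ^ (m + 1) * ∏ i, w (p i)) := by
            rw [hP0, Finset.sum_filter]
        _ = (N : ℂ) * ∑ p ∈ P0, ((1/2 : ℂ) ^ (m + 1) * ∏ i, w (p i)) := by
            rw [Finset.mul_sum]
    -- take real parts and bound
    have hNne : (N : ℂ) ≠ 0 := Nat.cast_ne_zero.mpr (NeZero.ne N)
    have hre : ((1 : ℝ) / N) * ∑ n : ZMod N, (D n) ^ (m + 1)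
        = (∑ p ∈ P0, ((1/2 : ℂ) ^ (m + 1) * ∏ i, w (p i))).re := by
      have : (((1 : ℝ) / N) * ∑ n : ZMod N, (D n) ^ (m + 1) : ℝ)
          = (((1 : ℂ) / N) * ∑ n : ZMod N, ((D n : ℝ) : ℂ) ^ (m + 1) : ℂ).re := by
        rw [show ((1 : ℂ) / N) * ∑ n : ZMod N, ((D n : ℝ) : ℂ) ^ (m + 1)
            = ((((1 : ℝ) / N) * ∑ n : ZMod N, (D n) ^ (m + 1) : ℝ) : ℂ) by push_cast; ring]
        rw [Complex.ofReal_re]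
      rw [this, hsum, show ((1 : ℂ) / N) * ((N : ℂ) * ∑ p ∈ P0,
          ((1/2 : ℂ) ^ (m + 1) * ∏ i, w (p i)))
          = ∑ p ∈ P0, ((1/2 : ℂ) ^ (m + 1) * ∏ i, w (p i)) by field_simp]
    have habs : ∀ p : Fin (m + 1) → ZMod N × Bool,
        ‖(1/2 : ℂ) ^ (m + 1) * ∏ i, w (p i)‖ = (1/2 : ℝ) ^ (m + 1) := by
      intro p
      rw [norm_mul, norm_pow, norm_prod]
      have h1 : ‖(1/2 : ℂ)‖ = (1/2 : ℝ) := by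
        rw [norm_div, norm_one]
        norm_num
      have h2 : ∏ i : Fin (m + 1), ‖w (p i)‖ = 1 :=
        Finset.prod_eq_one fun i _ => Complex.norm_exp_ofReal_mul_I _
      rw [h1, h2, mul_one]
    have hcount : (P0.card : ℝ) ≤ ((s - 1 : ℕ) : ℝ) ^ m * 2 ^ (m + 1) := by
      have := count_bound A t m
      rw [hAcard] at this
      calc (P0.card : ℝ) ≤ (((s - 1) ^ m * 2 ^ (m + 1) : ℕ) : ℝ) := by exact_mod_cast this
        _ = ((s - 1 : ℕ) : ℝ) ^ m * 2 ^ (m + 1) := by push_cast; ring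
    have h2pow : ((1 : ℝ)/2) ^ (m + 1) * (2 : ℝ) ^ (m + 1) = 1 := by
      rw [← mul_pow]; norm_num
    have hfinal : ((1 : ℝ) / N) * ∑ n : ZMod N, (D n) ^ (m + 1)
        ≤ ((s - 1 : ℕ) : ℝ) ^ m := by
      calc ((1 : ℝ) / N) * ∑ n : ZMod N, (D n) ^ (m + 1)
          = (∑ p ∈ P0, ((1/2 : ℂ) ^ (m + 1) * ∏ i, w (p i))).re := hre
        _ ≤ ‖∑ p ∈ P0, ((1/2 : ℂ) ^ (m + 1) * ∏ i, w (p i))‖ :=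
            Complex.re_le_norm _
        _ ≤ ∑ p ∈ P0, ‖(1/2 : ℂ) ^ (m + 1) * ∏ i, w (p i)‖ :=
            norm_sum_le _ _
        _ = ∑ p ∈ P0, (1/2 : ℝ) ^ (m + 1) := Finset.sum_congr rfl fun p _ => habs p
        _ = (P0.card : ℝ) * (1/2 : ℝ) ^ (m + 1) := by
            rw [Finset.sum_const, nsmul_eq_mul]
        _ ≤ (((s - 1 : ℕ) : ℝ) ^ m * 2 ^ (m + 1)) * (1/2 : ℝ) ^ (m + 1) := by
            apply mul_le_mul_of_nonneg_right hcount
            positivity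
        _ = ((s - 1 : ℕ) : ℝ) ^ m * ((1/2 : ℝ) ^ (m + 1) * 2 ^ (m + 1)) := by ring
        _ = ((s - 1 : ℕ) : ℝ) ^ m := by rw [h2pow, mul_one]
    have hmm : (m + 1) - 1 = m := by omega
    rw [hmm]
    have hcast : ((s - 1 : ℕ) : ℝ) = (s : ℝ) - 1 := by
      rw [Nat.cast_sub hs1, Nat.cast_one]
    rw [← hcast]
    exact hfinal
end
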